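/- arXiv:0909.2129 — 6 statements merged into one kernel-verified Lean document; each statement's English description precedes it below -/
import Mathlib

section
/- Let F be a polyhedral fan in R^n, C a cone of F, ω a point in the relative interior of C, and (ω_i) a sequence of points of the support of F, none lying in C, converging to ω. Then there exists a cone D of F containing a subsequence of (ω_i) such that C is a proper face of D. -/
/-- A polyhedral (finitely generated) cone in `ℝⁿ`. -/
def IsPolyCone {n : ℕ} (C : Set (EuclideanSpace ℝ (Fin n))) : Prop :=
  ∃ (m : ℕ) (v : Fin m → EuclideanSpace ℝ (Fin n)),
    C = {x | ∃ c : Fin m → ℝ, (∀ i, 0 ≤ c i) ∧ x = ∑ i, c i • v i}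

/-- `F` is a face of the cone `C` (cut out by a supporting linear functional,
or `C` itself). -/
def IsFaceOf {n : ℕ} (F C : Set (EuclideanSpace ℝ (Fin n))) : Prop :=
  F = C ∨ ∃ l : EuclideanSpace ℝ (Fin n) →ₗ[ℝ] ℝ,
    (∀ x ∈ C, l x ≤ 0) ∧ F = {x ∈ C | l x = 0}

/-- A polyhedral fan in `ℝⁿ`: a finite collection of polyhedral cones, closed
under taking faces, such that any two cones intersect in a common face. -/
structure PolyFan (n : ℕ) where
  cones : Set (Set (EuclideanSpace ℝ (Fin n)))
  finite : cones.Finite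
  poly : ∀ C ∈ cones, IsPolyCone C
  faces_mem : ∀ C ∈ cones, ∀ F, IsFaceOf F C → F ∈ cones
  inter_face : ∀ C ∈ cones, ∀ D ∈ cones, IsFaceOf (C ∩ D) C

/-- The support of a fan: the union of its cones. -/
def PolyFan.support {n : ℕ} (F : PolyFan n) : Set (EuclideanSpace ℝ (Fin n)) :=
  ⋃ C ∈ F.cones, C

/-- The dimension of a cone: the dimension of its affine hull. -/
noncomputable def coneDim {n : ℕ} (C : Set (EuclideanSpace ℝ (Fin n))) : ℕ :=
  Module.finrank ℝ (affineSpan ℝ C).direction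

/-- The relative interior of a set. -/
def relint {n : ℕ} (C : Set (EuclideanSpace ℝ (Fin n))) : Set (EuclideanSpace ℝ (Fin n)) :=
  intrinsicInterior ℝ C

/-- A maximal cone of a fan. -/
def PolyFan.IsMaximal {n : ℕ} (F : PolyFan n) (C : Set (EuclideanSpace ℝ (Fin n))) : Prop :=
  C ∈ F.cones ∧ ∀ D ∈ F.cones, C ⊆ D → D = C


/-- Conic Carathéodory: a nonnegative combination supported in `s` can be rewritten as a
nonnegative combination supported on a set where `v` is linearly independent. -/
private lemma carath {n m : ℕ} (v : Fin m → EuclideanSpace ℝ (Fin n)) (s : Finset (Fin m)) :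
    ∀ (c : Fin m → ℝ), (∀ i, 0 ≤ c i) → (∀ i, c i ≠ 0 → i ∈ s) →
    ∃ (t : Finset (Fin m)) (c' : Fin m → ℝ), (∀ i, 0 ≤ c' i) ∧ (∀ i, c' i ≠ 0 → i ∈ t) ∧
      (∑ i, c' i • v i) = ∑ i, c i • v i ∧ LinearIndependent ℝ (fun i : t => v i) := by
  induction s using Finset.strongInduction with
  | _ s IH =>
    intro c hc hsupp
    by_cases hind : LinearIndependent ℝ (fun i : s => v i)
    · exact ⟨s, c, hc, hsupp, rfl, hind⟩
    obtain ⟨g, hg0, j, hj⟩ := Fintype.not_linearIndependent_iff.mp hind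
    set ε : ℝ := if 0 < g j then 1 else -1 with hε
    set d : Fin m → ℝ := fun i => if h : i ∈ s then ε * g ⟨i, h⟩ else 0 with hd
    have hdmem : ∀ i, d i ≠ 0 → i ∈ s := by
      intro i hi
      by_contra h
      simp [hd, h] at hi
    have hdsum : ∑ i, d i • v i = 0 := by
      rw [← Finset.sum_subset (Finset.subset_univ s)
        (by intro i _ hi; simp [hd, hi])]
      rw [← Finset.sum_attach s (fun i => d i • v i)]
      have : ∀ i : s, d ↑i • v ↑i = ε • (g i • v ↑i) := by
        intro i
        simp [hd, i.2, mul_smul]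
      rw [Finset.sum_congr rfl (fun i _ => this i), ← Finset.smul_sum,
        ← Finset.univ_eq_attach, hg0, smul_zero]
    have hdj : 0 < d ↑j := by
      have : d ↑j = ε * g j := by simp [hd, j.2]
      rw [this, hε]
      rcases lt_or_gt_of_ne hj with h | h
      · simp [not_lt.mpr h.le, h]
      · simp [h]
    have hjT : (↑j : Fin m) ∈ s.filter (fun i => 0 < d i) :=
      Finset.mem_filter.mpr ⟨j.2, hdj⟩
    obtain ⟨i₀, hi₀, hmin⟩ := Finset.exists_min_image (s.filter (fun i => 0 < d i))
      (fun i => c i / d i) ⟨_, hjT⟩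
    obtain ⟨hi₀s, hdi₀⟩ := Finset.mem_filter.mp hi₀
    set t : ℝ := c i₀ / d i₀ with htdef
    have ht : 0 ≤ t := div_nonneg (hc _) hdi₀.le
    set c'' : Fin m → ℝ := fun i => c i - t * d i with hc''
    have hnn : ∀ i, 0 ≤ c'' i := by
      intro i
      by_cases hdi : 0 < d i
      · have hiT : i ∈ s.filter (fun i => 0 < d i) :=
          Finset.mem_filter.mpr ⟨hdmem i hdi.ne', hdi⟩
        have := hmin i hiT
        have h2 : t * d i ≤ c i := by
          rw [le_div_iff₀ hdi] at this
          exact this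
        simp [hc'']
        linarith
      · have : t * d i ≤ 0 := mul_nonpos_of_nonneg_of_nonpos ht (not_lt.mp hdi)
        have := hc i
        simp [hc'']
        linarith
    have hsup'' : ∀ i, c'' i ≠ 0 → i ∈ s.erase i₀ := by
      intro i hi
      rw [Finset.mem_erase]
      constructor
      · intro h
        apply hi
        rw [hc'', h, htdef]
        field_simp
        ring
      · by_contra h
        have hci : c i = 0 := by
          by_contra h'
          exact h (hsupp i h')
        have hdi : d i = 0 := by
          by_contra h'
          exact h (hdmem i h')
        exact hi (by simp [hc'', hci, hdi])
    have hsum'' : ∑ i, c'' i • v i = ∑ i, c i • v i := by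
      have : ∀ i : Fin m, c'' i • v i = c i • v i - t • (d i • v i) := by
        intro i
        rw [hc'', sub_smul, smul_smul]
      rw [Finset.sum_congr rfl (fun i _ => this i), Finset.sum_sub_distrib,
        ← Finset.smul_sum, hdsum, smul_zero, sub_zero]
    obtain ⟨t', c', h1, h2, h3, h4⟩ := IH (s.erase i₀) (Finset.erase_ssubset hi₀s) c'' hnn hsup''
    exact ⟨t', c', h1, h2, h3.trans hsum'', h4⟩

/-- The linear map sending coefficients supported on `t` to the combination. -/
private noncomputable def Lmap {n m : ℕ} (v : Fin m → EuclideanSpace ℝ (Fin n))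
    (t : Finset (Fin m)) : (↥t → ℝ) →ₗ[ℝ] EuclideanSpace ℝ (Fin n) where
  toFun c := ∑ i : t, c i • v ↑i
  map_add' a b := by simp [add_smul, Finset.sum_add_distrib]
  map_smul' r a := by simp [Finset.smul_sum, mul_smul]

private lemma sum_of_support {n m : ℕ} (v : Fin m → EuclideanSpace ℝ (Fin n))
    (t : Finset (Fin m)) (c : Fin m → ℝ) (h : ∀ i, c i ≠ 0 → i ∈ t) :
    ∑ i : t, c ↑i • v ↑i = ∑ i, c i • v i := by
  rw [Finset.sum_coe_sort t (fun i => c i • v i)]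
  refine Finset.sum_subset (Finset.subset_univ t) ?_
  intro i _ hi
  have : c i = 0 := by
    by_contra h'
    exact hi (h i h')
  simp [this]

private lemma isClosed_polyCone {n : ℕ} {C : Set (EuclideanSpace ℝ (Fin n))}
    (h : IsPolyCone C) : IsClosed C := by
  obtain ⟨m, v, rfl⟩ := h
  have key : {x | ∃ c : Fin m → ℝ, (∀ i, 0 ≤ c i) ∧ x = ∑ i, c i • v i}
      = ⋃ t ∈ {t : Finset (Fin m) | LinearIndependent ℝ (fun i : t => v i)},
          Lmap v t '' {c | ∀ i, 0 ≤ c i} := by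
    ext x
    simp only [Set.mem_setOf_eq, Set.mem_iUnion, Set.mem_image, exists_prop]
    constructor
    · rintro ⟨c, hc, rfl⟩
      obtain ⟨t, c', h1, h2, h3, h4⟩ := carath v Finset.univ c hc (fun i _ => Finset.mem_univ i)
      refine ⟨t, h4, fun i => c' ↑i, fun i => h1 _, ?_⟩
      show ∑ i : t, c' ↑i • v ↑i = _
      rw [sum_of_support v t c' h2, h3]
    · rintro ⟨t, hlin, c, hcnn, rfl⟩
      refine ⟨fun i => if h : i ∈ t then c ⟨i, h⟩ else 0, ?_, ?_⟩
      · intro i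
        by_cases h : i ∈ t <;> simp [h, hcnn _]
      · have hsup : ∀ i : Fin m, (if h : i ∈ t then c ⟨i, h⟩ else 0) ≠ 0 → i ∈ t := by
          intro i hi
          by_contra h
          simp [h] at hi
        rw [← sum_of_support v t _ hsup]
        show Lmap v t c = _
        show ∑ i : t, c i • v ↑i = _
        refine Finset.sum_congr rfl fun i _ => ?_
        simp [i.2]
  rw [key]
  refine Set.Finite.isClosed_biUnion (Set.toFinite _) ?_
  intro t ht
  have hclosed : IsClosed {c : ↥t → ℝ | ∀ i, 0 ≤ c i} := by
    have : {c : ↥t → ℝ | ∀ i, 0 ≤ c i} = ⋂ i, (fun c : ↥t → ℝ => c i) ⁻¹' Set.Ici 0 := by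
      ext c; simp [Set.mem_iInter]
    rw [this]
    exact isClosed_iInter fun i => IsClosed.preimage (continuous_apply i) isClosed_Ici
  have hinj : LinearMap.ker (Lmap v t) = ⊥ := by
    rw [LinearMap.ker_eq_bot']
    intro a ha
    have := Fintype.linearIndependent_iff.mp ht a ha
    funext i
    exact this i
  exact ((Lmap v t).isClosedEmbedding_of_injective hinj).isClosedMap _ hclosed

private lemma subset_face_of_relint_mem {n : ℕ} {C G : Set (EuclideanSpace ℝ (Fin n))}
    {ω : EuclideanSpace ℝ (Fin n)} (hface : IsFaceOf G C) (hω : ω ∈ relint C) (hωG : ω ∈ G) :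
    C ⊆ G := by
  rcases hface with rfl | ⟨l, hl, rfl⟩
  · exact subset_rfl
  obtain ⟨ωC, hlω⟩ := hωG
  obtain ⟨ω', hω'int, hcoe⟩ := mem_intrinsicInterior.mp hω
  obtain ⟨ε, hε, hball⟩ := Metric.mem_nhds_iff.mp (mem_interior_iff_mem_nhds.mp hω'int)
  intro x hx
  refine ⟨hx, le_antisymm (hl x hx) ?_⟩
  set t : ℝ := ε / (2 * (‖ω - x‖ + 1)) with htdef
  have hnorm : (0:ℝ) < ‖ω - x‖ + 1 := by positivity
  have ht : 0 < t := by positivity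
  have hspan : t • (ω - x) + ω ∈ affineSpan ℝ C := by
    have := AffineSubspace.smul_vsub_vadd_mem (affineSpan ℝ C) t
      (subset_affineSpan ℝ C ωC) (subset_affineSpan ℝ C hx) (subset_affineSpan ℝ C ωC)
    simpa [vsub_eq_sub, vadd_eq_add] using this
  set y : EuclideanSpace ℝ (Fin n) := t • (ω - x) + ω with hy
  have hyC : y ∈ C := by
    have hmem : (⟨y, hspan⟩ : affineSpan ℝ C) ∈ Metric.ball ω' ε := by
      rw [Metric.mem_ball, Subtype.dist_eq, hcoe]
      have h1 : dist y ω = t * ‖ω - x‖ := by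
        rw [dist_eq_norm, hy]
        simp [norm_smul, abs_of_pos ht]
      rw [h1]
      have h2 : t * ‖ω - x‖ ≤ t * (‖ω - x‖ + 1) := by nlinarith
      have h3 : t * (‖ω - x‖ + 1) = ε / 2 := by
        rw [htdef]; field_simp
      linarith
    exact hball hmem
  have hly : l y ≤ 0 := hl y hyC
  have hlyval : l y = - (t * l x) := by
    rw [hy]
    simp [map_add, map_smul, map_sub, hlω]
  rw [hlyval] at hly
  nlinarith

/-- If `ω` lies in the relative interior of a cone `C` of a fan `F` and a
sequence of points of `|F| \ C` converges to `ω`, then some cone `D` of `F` contains a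
subsequence and has `C` as a proper face. -/
theorem stmt0 {n : ℕ} (F : PolyFan n) (C : Set (EuclideanSpace ℝ (Fin n)))
    (hC : C ∈ F.cones) (ω : EuclideanSpace ℝ (Fin n)) (hω : ω ∈ relint C)
    (u : ℕ → EuclideanSpace ℝ (Fin n)) (hu : ∀ i, u i ∈ F.support \ C)
    (hlim : Filter.Tendsto u Filter.atTop (nhds ω)) :
    ∃ D ∈ F.cones, (IsFaceOf C D ∧ C ≠ D) ∧
      ∃ φ : ℕ → ℕ, StrictMono φ ∧ ∀ i, u (φ i) ∈ D := by
  have hpig : ∃ D ∈ F.cones, {i | u i ∈ D}.Infinite := by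
    by_contra h
    push_neg at h
    have hcover : (Set.univ : Set ℕ) ⊆ ⋃ D ∈ F.cones, {i | u i ∈ D} := by
      intro i _
      have := (hu i).1
      simp only [PolyFan.support, Set.mem_iUnion] at this
      obtain ⟨D, hD, hiD⟩ := this
      exact Set.mem_iUnion₂.mpr ⟨D, hD, hiD⟩
    have hfin : (Set.univ : Set ℕ).Finite :=
      Set.Finite.subset (Set.Finite.biUnion F.finite
        (fun D hD => h D hD)) hcover
    exact Set.infinite_univ hfin
  obtain ⟨D, hD, hinf⟩ := hpig
  set φ := Nat.nth (fun i => u i ∈ D) with hφ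
  have hφmono : StrictMono φ := Nat.nth_strictMono hinf
  have hφmem : ∀ i, u (φ i) ∈ D := fun i => Nat.nth_mem_of_infinite hinf i
  have hωD : ω ∈ D := by
    have hcl : IsClosed D := isClosed_polyCone (F.poly D hD)
    have hlim2 : Filter.Tendsto (u ∘ φ) Filter.atTop (nhds ω) :=
      hlim.comp hφmono.tendsto_atTop
    exact hcl.mem_of_tendsto hlim2 (Filter.Eventually.of_forall hφmem)
  have hsub : C ⊆ D := by
    have hface := F.inter_face C hC D hD
    have hsub' : C ⊆ C ∩ D :=
      subset_face_of_relint_mem hface hω ⟨intrinsicInterior_subset hω, hωD⟩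
    exact fun x hx => (hsub' hx).2
  have hCD : IsFaceOf C D := by
    have := F.inter_face D hD C hC
    rwa [Set.inter_eq_right.mpr hsub] at this
  have hne : C ≠ D := fun h => (hu (φ 0)).2 (h ▸ hφmem 0)
  exact ⟨D, hD, ⟨hCD, hne⟩, φ, hφmono, hφmem⟩
end

section
/- Let E be a pure m-dimensional polyhedral fan in R^n and F any polyhedral fan in R^n whose support equals the support of E. Then F is also a pure m-dimensional fan, i.e., every cone of F is a face of an m-dimensional cone of F. -/
section Aux
open Set Metric
variable {n : ℕ}
local notation "X" n => EuclideanSpace ℝ (Fin n)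

lemma polyCone_zero_mem {C : Set (X n)} (h : IsPolyCone C) : (0 : X n) ∈ C := by
  obtain ⟨m, v, rfl⟩ := h
  exact ⟨0, fun i => le_refl 0, by simp⟩

lemma polyCone_convex {C : Set (X n)} (h : IsPolyCone C) : Convex ℝ C := by
  obtain ⟨m, v, rfl⟩ := h
  rintro x ⟨c, hc, rfl⟩ y ⟨d, hd, rfl⟩ a b ha hb _
  refine ⟨fun i => a * c i + b * d i,
    fun i => add_nonneg (mul_nonneg ha (hc i)) (mul_nonneg hb (hd i)), ?_⟩
  simp [Finset.smul_sum, Finset.sum_add_distrib, add_smul, mul_smul]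

lemma cone_caratheodory {m : ℕ} (v : Fin m → X n) (c : Fin m → ℝ) (hc : ∀ i, 0 ≤ c i) :
    ∃ c' : Fin m → ℝ, (∀ i, 0 ≤ c' i) ∧ (∑ i, c' i • v i = ∑ i, c i • v i) ∧
      LinearIndependent ℝ (fun i : {i // c' i ≠ 0} => v i) := by
  classical
  generalize hk : (Finset.univ.filter (fun i => c i ≠ 0)).card = k
  induction k using Nat.strong_induction_on generalizing c with
  | _ k ih =>
    by_cases hli : LinearIndependent ℝ (fun i : {i // c i ≠ 0} => v i)
    · exact ⟨c, hc, rfl, hli⟩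
    haveI : Fintype {i // c i ≠ 0} := Fintype.ofFinite _
    rw [Fintype.not_linearIndependent_iff] at hli
    obtain ⟨g, hg0, j0, hj0⟩ := hli
    set h : Fin m → ℝ := fun i => if hi : c i = 0 then 0 else g ⟨i, hi⟩ with hh
    have hsupp : ∀ i, h i ≠ 0 → c i ≠ 0 := by
      intro i hi hci; simp [hh, dif_pos hci] at hi
    have hsum : ∑ i, h i • v i = 0 := by
      rw [← Finset.sum_filter_of_ne (p := fun i => c i ≠ 0)
        (f := fun i => h i • v i) (fun i _ hne hci => hne (by
          simp only [hh, dif_pos hci, zero_smul] at *)),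
        Finset.sum_subtype (p := fun i => c i ≠ 0) _ (by simp) (fun i => h i • v i), ← hg0]
      exact Finset.sum_congr rfl fun i _ => by simp [hh, dif_neg i.2]
    have hj0' : h j0 ≠ 0 := by simpa [hh, dif_neg j0.2] using hj0
    obtain ⟨h, hsum, hsupp, j1, hj1⟩ : ∃ h' : Fin m → ℝ, (∑ i, h' i • v i = 0) ∧
        (∀ i, h' i ≠ 0 → c i ≠ 0) ∧ ∃ i, 0 < h' i := by
      by_cases hp : ∃ i, 0 < h i
      · exact ⟨h, hsum, hsupp, hp⟩
      · push_neg at hp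
        refine ⟨-h, by simp [hsum], fun i hi => hsupp i (by simpa using hi), j0, ?_⟩
        exact neg_pos.2 ((hp j0).lt_of_ne hj0')
    set P : Finset (Fin m) := Finset.univ.filter (fun i => 0 < h i) with hP
    have hPne : P.Nonempty := ⟨j1, by simp [hP, hj1]⟩
    have hPim : (P.image (fun i => c i / h i)).Nonempty := hPne.image _
    set t : ℝ := (P.image (fun i => c i / h i)).min' hPim with ht
    have htmem := (P.image (fun i => c i / h i)).min'_mem hPim
    rw [Finset.mem_image] at htmem
    obtain ⟨i0, hi0P, hi0⟩ := htmem
    have hi0pos : 0 < h i0 := by simpa [hP] using hi0P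
    have ht0 : 0 ≤ t := by
      rw [ht, ← hi0]; exact div_nonneg (hc i0) hi0pos.le
    have htle : ∀ i, 0 < h i → t * h i ≤ c i := by
      intro i hi
      have : t ≤ c i / h i :=
        Finset.min'_le _ _ (Finset.mem_image.2 ⟨i, by simp [hP, hi], rfl⟩)
      calc t * h i ≤ (c i / h i) * h i := by nlinarith
        _ = c i := div_mul_cancel₀ _ hi.ne'
    set c' : Fin m → ℝ := fun i => c i - t * h i with hc'
    have hc'0 : ∀ i, 0 ≤ c' i := by
      intro i
      rcases lt_or_ge 0 (h i) with hi | hi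
      · simpa [hc'] using sub_nonneg.2 (htle i hi)
      · have : t * h i ≤ 0 := mul_nonpos_of_nonneg_of_nonpos ht0 hi
        have := hc i; simp only [hc']; linarith
    have hc'sum : ∑ i, c' i • v i = ∑ i, c i • v i := by
      simp only [hc', sub_smul, Finset.sum_sub_distrib, mul_smul, ← Finset.smul_sum, hsum,
        smul_zero, sub_zero]
    have hcard : (Finset.univ.filter (fun i => c' i ≠ 0)).card < k := by
      rw [← hk]
      apply Finset.card_lt_card
      constructor
      · intro i hi
        simp only [Finset.mem_filter, Finset.mem_univ, true_and, hc'] at hi ⊢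
        intro hci
        rcases eq_or_ne (h i) 0 with h0 | h0
        · exact hi (by simp [hci, h0])
        · exact hsupp i h0 hci
      · intro hsub
        have hi0c : c i0 ≠ 0 := hsupp i0 hi0pos.ne'
        have h1 : c' i0 ≠ 0 := by
          have := hsub (Finset.mem_filter.2 ⟨Finset.mem_univ _, hi0c⟩)
          exact (Finset.mem_filter.1 this).2
        apply h1
        show c i0 - t * h i0 = 0
        rw [ht, ← hi0, div_mul_cancel₀ _ hi0pos.ne', sub_self]
    obtain ⟨c'', h1, h2, h3⟩ := ih _ hcard c' hc'0 rfl
    exact ⟨c'', h1, h2.trans hc'sum, h3⟩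

lemma sum_coe_filter_eq {m : ℕ} {M : Type*} [AddCommMonoid M] (S : Finset (Fin m))
    (f : Fin m → M) (hf : ∀ i, i ∉ S → f i = 0) : ∑ i : ↥S, f (↑i) = ∑ i, f i := by
  rw [Finset.sum_coe_sort S f]
  exact Finset.sum_subset (S.subset_univ) (fun i _ hi => hf i hi)

lemma polyCone_isClosed {C : Set (X n)} (h : IsPolyCone C) : IsClosed C := by
  classical
  obtain ⟨m, v, rfl⟩ := h
  have key : {x : X n | ∃ c : Fin m → ℝ, (∀ i, 0 ≤ c i) ∧ x = ∑ i, c i • v i} =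
      ⋃ S ∈ {S : Finset (Fin m) | LinearIndependent ℝ (fun i : ↥S => v i)},
        (fun g : ↥S → ℝ => ∑ i : ↥S, g i • v (↑i)) '' {g | ∀ i, 0 ≤ g i} := by
    ext x
    simp only [mem_setOf_eq, mem_iUnion, mem_image]
    constructor
    · rintro ⟨c, hc, rfl⟩
      obtain ⟨c', hc'0, hc'sum, hc'li⟩ := cone_caratheodory v c hc
      set S : Finset (Fin m) := Finset.univ.filter (fun i => c' i ≠ 0) with hS
      have he : ∀ i : ↥S, c' (↑i) ≠ 0 := fun i => (Finset.mem_filter.1 i.2).2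
      refine ⟨S, ?_, fun i => c' i, fun i => hc'0 i, ?_⟩
      · have := hc'li.comp (Equiv.subtypeEquivRight (p := fun i => i ∈ S) (q := fun i => c' i ≠ 0)
          (fun i => by simp [hS])) (Equiv.injective _)
        exact this
      · rw [sum_coe_filter_eq S (fun i => c' i • v i) (fun i hi => by
          have : c' i = 0 := by by_contra hne; exact hi (by simp [hS, hne])
          simp [this]), hc'sum]
    · rintro ⟨S, hS, g, hg, rfl⟩
      refine ⟨fun i => if hi : i ∈ S then g ⟨i, hi⟩ else 0, fun i => ?_, ?_⟩
      · by_cases hi : i ∈ S <;> simp [hi, hg _]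
      · rw [← sum_coe_filter_eq S _ (fun i hi => by simp [dif_neg hi])]
        exact (Finset.sum_congr rfl fun i _ => by simp [dif_pos i.2]).symm
  rw [key]
  apply Set.Finite.isClosed_biUnion (Set.toFinite _)
  intro S hS
  set φ : (↥S → ℝ) →ₗ[ℝ] (X n) :=
    { toFun := fun g => ∑ i : ↥S, g i • v (↑i)
      map_add' := fun g₁ g₂ => by simp [add_smul, Finset.sum_add_distrib]
      map_smul' := fun r g => by simp [smul_smul, Finset.smul_sum] } with hφ
  have hinj : Function.Injective φ := by
    rw [← LinearMap.ker_eq_bot, LinearMap.ker_eq_bot']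
    intro g hg0
    have := Fintype.linearIndependent_iff.1 hS g hg0
    funext i; exact this i
  have hemb := LinearMap.isClosedEmbedding_of_injective (LinearMap.ker_eq_bot.2 hinj)
  have horth : IsClosed {g : ↥S → ℝ | ∀ i, 0 ≤ g i} := by
    have : {g : ↥S → ℝ | ∀ i, 0 ≤ g i} = ⋂ i, {g | 0 ≤ g i} := by
      ext g; simp [mem_iInter]
    rw [this]
    exact isClosed_iInter fun i => isClosed_le continuous_const (continuous_apply i)
  exact hemb.isClosedMap _ horth

lemma relint_ball {s : Set (X n)} {x : X n} (hx : x ∈ intrinsicInterior ℝ s) :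
    ∃ ε > 0, ∀ y ∈ (affineSpan ℝ s : Set (X n)), dist y x < ε → y ∈ s := by
  obtain ⟨x', hx', rfl⟩ := hx
  rw [mem_interior_iff_mem_nhds, Metric.mem_nhds_iff] at hx'
  obtain ⟨ε, hε, hball⟩ := hx'
  refine ⟨ε, hε, fun y hy hdist => ?_⟩
  have : (⟨y, hy⟩ : affineSpan ℝ s) ∈ ball x' ε := by
    rw [mem_ball, Subtype.dist_eq]; exact hdist
  exact hball this

lemma linear_eq_zero_of_relint {s : Set (X n)} {l : (X n) →ₗ[ℝ] ℝ} {x : X n}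
    (hl : ∀ y ∈ s, l y ≤ 0) (hx : x ∈ intrinsicInterior ℝ s) (hx0 : l x = 0) :
    ∀ y ∈ s, l y = 0 := by
  obtain ⟨ε, hε, hball⟩ := relint_ball hx
  have hxs : x ∈ s := intrinsicInterior_subset hx
  intro y hy
  refine le_antisymm (hl y hy) ?_
  set t : ℝ := ε / (2 * (dist x y + 1)) with htdef
  have hd0 : (0:ℝ) ≤ dist x y := dist_nonneg
  have ht : 0 < t := by positivity
  set z : X n := t • (x - y) + x with hz
  have hzspan : z ∈ (affineSpan ℝ s : Set (X n)) := by
    have := AffineSubspace.smul_vsub_vadd_mem (affineSpan ℝ s) t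
      (subset_affineSpan ℝ s hxs) (subset_affineSpan ℝ s hy) (subset_affineSpan ℝ s hxs)
    simpa [hz] using this
  have hzd : dist z x < ε := by
    rw [hz, dist_eq_norm]
    simp only [add_sub_cancel_right, norm_smul, Real.norm_eq_abs, abs_of_pos ht]
    rw [← dist_eq_norm]
    calc t * dist x y ≤ t * (dist x y + 1) := by nlinarith
      _ = ε / 2 := by rw [htdef]; field_simp
      _ < ε := by linarith
  have hzs : z ∈ s := hball z hzspan hzd
  have : l z ≤ 0 := hl z hzs
  rw [hz] at this
  simp only [map_add, map_smul, map_sub, hx0, smul_eq_mul] at this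
  nlinarith

lemma direction_affineSpan_of_zero_mem {s : Set (X n)} (h0 : (0 : X n) ∈ s) :
    (affineSpan ℝ s).direction = Submodule.span ℝ s := by
  rw [direction_affineSpan]
  apply le_antisymm
  · rw [vectorSpan_def, Submodule.span_le]
    rintro w hw
    rw [Set.mem_vsub] at hw
    obtain ⟨a, ha, b, hb, rfl⟩ := hw
    exact Submodule.sub_mem _ (Submodule.subset_span ha) (Submodule.subset_span hb)
  · rw [Submodule.span_le]
    intro a ha
    rw [SetLike.mem_coe, vectorSpan_def]
    exact Submodule.subset_span (Set.mem_vsub.2 ⟨a, ha, 0, h0, sub_zero a⟩)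

lemma affineSpan_coe_of_zero_mem {s : Set (X n)} (h0 : (0 : X n) ∈ s) :
    (affineSpan ℝ s : Set (X n)) = ↑(Submodule.span ℝ s) := by
  ext x
  constructor
  · intro hx
    have h0' : (0 : X n) ∈ affineSpan ℝ s := subset_affineSpan ℝ s h0
    have := AffineSubspace.vsub_mem_direction hx h0'
    rw [direction_affineSpan_of_zero_mem h0] at this
    simpa using this
  · intro hx
    rw [SetLike.mem_coe, ← direction_affineSpan_of_zero_mem h0] at hx
    have := AffineSubspace.vadd_mem_of_mem_direction hx (subset_affineSpan ℝ s h0)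
    simpa using this

lemma coneDim_mono {s t : Set (X n)} (h : s ⊆ t) :
    Module.finrank ℝ (affineSpan ℝ s).direction ≤ Module.finrank ℝ (affineSpan ℝ t).direction :=
  Submodule.finrank_mono (AffineSubspace.direction_le (affineSpan_mono ℝ h))

lemma affineSpan_le_of_ball {M : Set (X n)} (hconv : Convex ℝ M) {x : X n} (hx : x ∈ M)
    {ε : ℝ} (hε : 0 < ε) :
    affineSpan ℝ M ≤ affineSpan ℝ (M ∩ ball x ε) := by
  rw [affineSpan_le]
  intro y hy
  rcases eq_or_ne y x with rfl | hne
  · exact subset_affineSpan ℝ _ ⟨hy, mem_ball_self hε⟩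
  have hd : 0 < dist y x := dist_pos.2 hne
  set t : ℝ := min 1 (ε / (2 * dist y x)) with htdef
  have ht0 : 0 < t := lt_min one_pos (by positivity)
  have ht1 : t ≤ 1 := min_le_left _ _
  set z : X n := t • y + (1 - t) • x with hz
  have hzM : z ∈ M := hconv hy hx ht0.le (by linarith) (by ring)
  have hzb : z ∈ ball x ε := by
    rw [mem_ball, dist_eq_norm, hz]
    have : t • y + (1 - t) • x - x = t • (y - x) := by
      rw [sub_smul, one_smul, smul_sub]; abel
    rw [this, norm_smul, Real.norm_eq_abs, abs_of_pos ht0, ← dist_eq_norm]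
    have : t ≤ ε / (2 * dist y x) := min_le_right _ _
    calc t * dist y x ≤ ε / (2 * dist y x) * dist y x := by nlinarith
      _ = ε / 2 := by field_simp
      _ < ε := by linarith
  have hxb : x ∈ M ∩ ball x ε := ⟨hx, mem_ball_self hε⟩
  have hzmem : z ∈ affineSpan ℝ (M ∩ ball x ε) := subset_affineSpan ℝ _ ⟨hzM, hzb⟩
  have hxmem : x ∈ affineSpan ℝ (M ∩ ball x ε) := subset_affineSpan ℝ _ hxb
  have := AffineSubspace.smul_vsub_vadd_mem (affineSpan ℝ (M ∩ ball x ε)) t⁻¹ hzmem hxmem hxmem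
  have heq : t⁻¹ • (z -ᵥ x) +ᵥ x = y := by
    have : z -ᵥ x = t • (y - x) := by
      rw [hz]; show t • y + (1 - t) • x - x = t • (y - x)
      rw [sub_smul, one_smul, smul_sub]; abel
    rw [this, smul_smul, inv_mul_cancel₀ ht0.ne']
    show (1:ℝ) • (y - x) + x = y
    rw [one_smul]; abel
  rwa [heq] at this

open MeasureTheory in
lemma exists_large_of_cover {V : Submodule ℝ (X n)} {x : X n} (hx : x ∈ V) {ε : ℝ} (hε : 0 < ε)
    (S : Set (Set (X n))) (hS : S.Finite)
    (hcover : ∀ y, y ∈ V → dist y x < ε → y ∈ ⋃₀ S) :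
    ∃ A ∈ S, Module.finrank ℝ V ≤ Module.finrank ℝ (affineSpan ℝ A).direction := by
  by_contra hcon
  push_neg at hcon
  borelize ↥V
  set μ : Measure ↥V := (Module.finBasis ℝ ↥V).addHaar with hμ
  have hball : (ball (⟨x, hx⟩ : ↥V) ε) ⊆ ⋃ A ∈ hS.toFinset, ((↑) ⁻¹' A : Set ↥V) := by
    intro y hy
    rw [mem_ball, Subtype.dist_eq] at hy
    obtain ⟨A, hA, hyA⟩ := hcover (↑y) y.2 hy
    exact mem_iUnion₂.2 ⟨A, hS.mem_toFinset.2 hA, hyA⟩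
  have hzero : ∀ A ∈ hS.toFinset, μ ((↑) ⁻¹' A : Set ↥V) = 0 := by
    intro A hA
    rw [hS.mem_toFinset] at hA
    set W : AffineSubspace ℝ ↥V := (affineSpan ℝ A).comap (V.subtype.toAffineMap) with hW
    have hWne : W ≠ ⊤ := by
      intro htop
      have hsub : ∀ w : ↥V, (↑w : X n) ∈ affineSpan ℝ A := by
        intro w
        have : w ∈ W := htop ▸ AffineSubspace.mem_top ℝ _ w
        exact this
      have hdir : V ≤ (affineSpan ℝ A).direction := by
        intro w hw
        have h1 := hsub ⟨w, hw⟩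
        have h2 := hsub (0 : ↥V)
        have := AffineSubspace.vsub_mem_direction h1 h2
        simpa using this
      exact absurd (Submodule.finrank_mono hdir) (not_le.2 (hcon A hA))
    have hWzero : μ (W : Set ↥V) = 0 := Measure.addHaar_affineSubspace μ W hWne
    refine measure_mono_null ?_ hWzero
    intro y hy
    show y ∈ W
    rw [hW, AffineSubspace.mem_comap]
    exact subset_affineSpan ℝ A hy
  have hpos : 0 < μ (ball (⟨x, hx⟩ : ↥V) ε) := measure_ball_pos μ _ hε
  have : μ (ball (⟨x, hx⟩ : ↥V) ε) ≤ ∑ A ∈ hS.toFinset, μ ((↑) ⁻¹' A : Set ↥V) :=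
    (measure_mono hball).trans (measure_biUnion_finset_le _ _)
  rw [Finset.sum_eq_zero hzero] at this
  exact absurd (le_antisymm this hpos.le) hpos.ne'

lemma face_eq_of_relint {G D : Set (X n)} (hf : IsFaceOf G D) {x : X n}
    (hxG : x ∈ G) (hx : x ∈ intrinsicInterior ℝ D) : G = D := by
  rcases hf with rfl | ⟨l, hl, rfl⟩
  · rfl
  · have h0 : l x = 0 := hxG.2
    have hall := linear_eq_zero_of_relint hl hx h0
    ext y; exact ⟨fun h => h.1, fun h => ⟨h, hall y h⟩⟩

lemma exists_maximal_above (F : PolyFan n) {C : Set (X n)} (hC : C ∈ F.cones) :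
    ∃ D, F.IsMaximal D ∧ C ⊆ D := by
  have hfin : {D | D ∈ F.cones ∧ C ⊆ D}.Finite := F.finite.subset (fun D hD => hD.1)
  obtain ⟨D, hD, hmax⟩ := Set.Finite.exists_maximalFor id _ hfin ⟨C, hC, subset_rfl⟩
  exact ⟨D, ⟨hD.1, fun D' hD' hsub => le_antisymm (hmax ⟨hD', hD.2.trans hsub⟩ hsub) hsub⟩, hD.2⟩

lemma mem_support_iff {F : PolyFan n} {x : X n} :
    x ∈ F.support ↔ ∃ C ∈ F.cones, x ∈ C := by
  simp [PolyFan.support]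

lemma coneDim_le_of_fan (E : PolyFan n) {m : ℕ} (hE : ∀ C, E.IsMaximal C → coneDim C = m)
    {A : Set (X n)} (hA : A ∈ E.cones) : coneDim A ≤ m := by
  obtain ⟨M, hMmax, hAM⟩ := exists_maximal_above E hA
  rw [← hE M hMmax]
  exact coneDim_mono hAM

lemma maximal_dim {m : ℕ} (E F : PolyFan n)
    (hE : ∀ C, E.IsMaximal C → coneDim C = m)
    (hsupp : F.support = E.support) {D : Set (X n)} (hD : F.IsMaximal D) : coneDim D = m := by
  obtain ⟨hDmem, hDmax⟩ := hD
  have hDpoly := F.poly D hDmem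
  have hDconv := polyCone_convex hDpoly
  have hD0 : (0 : X n) ∈ D := polyCone_zero_mem hDpoly
  obtain ⟨x, hx⟩ := Set.Nonempty.intrinsicInterior hDconv ⟨0, hD0⟩
  have hxD : x ∈ D := intrinsicInterior_subset hx
  -- Step A : every cone of F containing x equals D
  have hA : ∀ C' ∈ F.cones, x ∈ C' → C' = D := by
    intro C' hC' hxC'
    have hface := F.inter_face D hDmem C' hC'
    have heq := face_eq_of_relint hface (⟨hxD, hxC'⟩ : x ∈ D ∩ C') hx
    have hDsub : D ⊆ C' := by rw [← heq]; exact inter_subset_right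
    exact hDmax C' hC' hDsub
  -- a ball around x avoiding all cones not containing x
  have hKfin : {C' | C' ∈ F.cones ∧ x ∉ C'}.Finite := F.finite.subset fun C' h => h.1
  have hK : IsClosed (⋃ C' ∈ {C' | C' ∈ F.cones ∧ x ∉ C'}, C') :=
    Set.Finite.isClosed_biUnion hKfin fun C' hC' => polyCone_isClosed (F.poly _ hC'.1)
  have hxK : x ∉ ⋃ C' ∈ {C' | C' ∈ F.cones ∧ x ∉ C'}, C' := by
    rw [mem_iUnion₂]
    rintro ⟨C', ⟨-, hxC'⟩, hxmem⟩
    exact hxC' hxmem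
  obtain ⟨ε₁, hε₁, hball₁⟩ := Metric.mem_nhds_iff.1 (hK.isOpen_compl.mem_nhds hxK)
  have hballF : ∀ y, dist y x < ε₁ → y ∈ F.support → y ∈ D := by
    intro y hy hys
    obtain ⟨C', hC', hyC'⟩ := mem_support_iff.1 hys
    by_cases hxC' : x ∈ C'
    · exact (hA C' hC' hxC') ▸ hyC'
    · exfalso
      have : y ∈ ⋃ C' ∈ {C' | C' ∈ F.cones ∧ x ∉ C'}, C' :=
        mem_iUnion₂.2 ⟨C', ⟨hC', hxC'⟩, hyC'⟩
      exact (hball₁ (mem_ball.2 hy)) this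
  -- lower bound : m ≤ coneDim D
  have hxE : x ∈ E.support := by
    rw [← hsupp]; exact mem_support_iff.2 ⟨D, hDmem, hxD⟩
  obtain ⟨C0, hC0, hxC0⟩ := mem_support_iff.1 hxE
  obtain ⟨M, hMmax, hCM⟩ := exists_maximal_above E hC0
  have hxM : x ∈ M := hCM hxC0
  have hMD : M ∩ ball x ε₁ ⊆ D := by
    rintro y ⟨hyM, hyb⟩
    refine hballF y (mem_ball.1 hyb) ?_
    rw [hsupp]
    exact mem_support_iff.2 ⟨M, hMmax.1, hyM⟩
  have hlow : m ≤ coneDim D := by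
    rw [← hE M hMmax]
    calc coneDim M ≤ coneDim (M ∩ ball x ε₁) :=
          Submodule.finrank_mono (AffineSubspace.direction_le
            (affineSpan_le_of_ball (polyCone_convex (E.poly M hMmax.1)) hxM hε₁))
      _ ≤ coneDim D := coneDim_mono hMD
  -- upper bound : coneDim D ≤ m
  obtain ⟨ε₂, hε₂, hball₂⟩ := relint_ball hx
  rw [affineSpan_coe_of_zero_mem hD0] at hball₂
  have hxV : x ∈ Submodule.span ℝ D := Submodule.subset_span hxD
  have hcover : ∀ y, y ∈ Submodule.span ℝ D → dist y x < ε₂ → y ∈ ⋃₀ E.cones := by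
    intro y hyV hyd
    have hyD : y ∈ D := hball₂ y hyV hyd
    have : y ∈ E.support := by
      rw [← hsupp]; exact mem_support_iff.2 ⟨D, hDmem, hyD⟩
    obtain ⟨C', hC', hyC'⟩ := mem_support_iff.1 this
    exact ⟨C', hC', hyC'⟩
  obtain ⟨A, hAE, hdim⟩ := exists_large_of_cover hxV hε₂ E.cones E.finite hcover
  have hhigh : coneDim D ≤ m := by
    have h1 : coneDim D = Module.finrank ℝ (Submodule.span ℝ D) := by
      unfold coneDim; rw [direction_affineSpan_of_zero_mem hD0]
    rw [h1]
    exact hdim.trans (coneDim_le_of_fan E hE hAE)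
  exact le_antisymm hhigh hlow


end Aux

/-- If `E` is a pure `m`-dimensional fan and `F` is any fan with the same
support, then `F` is also pure `m`-dimensional: every cone of `F` is a face of an
`m`-dimensional cone of `F`. -/
theorem stmt1 {n : ℕ} (m : ℕ) (E F : PolyFan n)
    (hE : ∀ C, E.IsMaximal C → coneDim C = m)
    (hsupp : F.support = E.support) :
    ∀ C ∈ F.cones, ∃ D ∈ F.cones, coneDim D = m ∧ IsFaceOf C D := by
  intro C hC
  obtain ⟨D, hDmax, hCD⟩ := exists_maximal_above F hC
  refine ⟨D, hDmax.1, maximal_dim E F hE hsupp hDmax, ?_⟩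
  have := F.inter_face D hDmax.1 C hC
  rwa [Set.inter_eq_self_of_subset_right hCD] at this
end

section
/- Let E and F be polyhedral fans in R^n. Then E refines F (i.e., for every cone K of E there is a cone L of F with the relative interior of K contained in the relative interior of L) if and only if for every maximal cone C of E there exists a cone D of F such that the relative interior of C is contained in the relative interior of D. -/
set_option maxHeartbeats 1000000
set_option linter.unusedSectionVars false

noncomputable section StmtAux
open Set
set_option linter.unusedSectionVars false
section Helpers
variable {X : Type*} [NormedAddCommGroup X] [InnerProductSpace ℝ X] [FiniteDimensional ℝ X]

def coneOf {ι : Type*} [Fintype ι] (v : ι → X) : Set X :=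
  {x | ∃ c : ι → ℝ, (∀ i, 0 ≤ c i) ∧ x = ∑ i, c i • v i}


lemma zero_mem_coneOf {ι : Type*} [Fintype ι] (v : ι → X) : (0:X) ∈ coneOf v :=
  ⟨0, fun _ => le_rfl, by simp⟩

lemma convex_coneOf {ι : Type*} [Fintype ι] (v : ι → X) : Convex ℝ (coneOf v) := by
  rintro x ⟨c, hc, rfl⟩ y ⟨d, hd, rfl⟩ a b ha hb hab
  refine ⟨fun i => a * c i + b * d i, fun i => add_nonneg (mul_nonneg ha (hc i)) (mul_nonneg hb (hd i)), ?_⟩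
  simp [Finset.smul_sum, Finset.sum_add_distrib, smul_smul, add_smul]

lemma smul_mem_coneOf {ι : Type*} [Fintype ι] {v : ι → X} {x : X} (hx : x ∈ coneOf v)
    {t : ℝ} (ht : 0 ≤ t) : t • x ∈ coneOf v := by
  obtain ⟨c, hc, rfl⟩ := hx
  exact ⟨fun i => t * c i, fun i => mul_nonneg ht (hc i), by simp [Finset.smul_sum, smul_smul]⟩

lemma mem_coneOf_self {ι : Type*} [Fintype ι] [DecidableEq ι] (v : ι → X) (i : ι) :
    v i ∈ coneOf v := by
  refine ⟨Pi.single i 1, fun j => by by_cases h : j = i <;> simp [Pi.single_apply, h], ?_⟩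
  rw [Finset.sum_eq_single i] <;> simp +contextual [Pi.single_apply]



lemma isClosed_coneOf_li {ι : Type*} [Fintype ι] {v : ι → X}
    (hv : LinearIndependent ℝ v) : IsClosed (coneOf v) := by
  classical
  let L : (ι → ℝ) →ₗ[ℝ] X := LinearMap.lsum ℝ (fun _ ↦ ℝ) ℕ fun i ↦ LinearMap.id.smulRight (v i)
  have hL : ∀ c : ι → ℝ, L c = ∑ i, c i • v i := by
    intro c; simp [L, LinearMap.lsum_apply]
  have hinj : Function.Injective L :=
    LinearMap.ker_eq_bot.mp (Fintype.linearIndependent_iff'.mp hv)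
  have hemb := LinearMap.isClosedEmbedding_of_injective (LinearMap.ker_eq_bot.mpr hinj)
    (f := L) (𝕜 := ℝ)
  have horth : IsClosed {c : ι → ℝ | ∀ i, 0 ≤ c i} := by
    have : {c : ι → ℝ | ∀ i, 0 ≤ c i} = ⋂ i, {c | 0 ≤ c i} := by ext; simp
    rw [this]
    exact isClosed_iInter fun i => isClosed_le continuous_const (continuous_apply i)
  have him : coneOf v = L '' {c : ι → ℝ | ∀ i, 0 ≤ c i} := by
    ext x
    constructor
    · rintro ⟨c, hc, rfl⟩; exact ⟨c, hc, hL c⟩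
    · rintro ⟨c, hc, rfl⟩; exact ⟨c, hc, hL c⟩
  rw [him]
  exact hemb.isClosedMap _ horth

lemma cara_aux {ι : Type*} [Fintype ι] [DecidableEq ι] (v : ι → X) :
    ∀ (k : ℕ) (c : ι → ℝ), (Finset.univ.filter (fun i => c i ≠ 0)).card ≤ k →
      (∀ i, 0 ≤ c i) →
      ∃ s : Finset ι, LinearIndependent ℝ (fun i : s => v i) ∧
        (∑ i, c i • v i) ∈ coneOf (fun i : s => v i) := by
  intro k
  induction k with
  | zero =>
    intro c hcard _
    have hall : ∀ i, c i = 0 := by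
      intro i
      by_contra h
      have : i ∈ Finset.univ.filter (fun i => c i ≠ 0) := by simp [h]
      have := Finset.card_pos.mpr ⟨i, this⟩
      omega
    refine ⟨∅, linearIndependent_empty_type, 0, fun i => le_rfl, ?_⟩
    simp [hall]
  | succ k ih =>
    intro c hcard hc
    set supp := Finset.univ.filter (fun i => c i ≠ 0) with hsupp
    by_cases hli : LinearIndependent ℝ (fun i : supp => v i)
    · refine ⟨supp, hli, fun i => c i, fun i => hc i, ?_⟩
      rw [Finset.sum_coe_sort supp (fun i => c i • v i)]
      exact (Finset.sum_subset (Finset.subset_univ _) (by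
        intro i _ hi
        have : c i = 0 := by simpa [hsupp] using hi
        simp [this])).symm
    · obtain ⟨g, hg, j, hj⟩ := Fintype.not_linearIndependent_iff.mp hli
      -- extend g to d on ι
      set d : ι → ℝ := fun i => if h : i ∈ supp then g ⟨i, h⟩ else 0 with hd
      have hdsum : ∑ i, d i • v i = 0 := by
        have h1 : ∑ i, d i • v i = ∑ i ∈ supp, d i • v i :=
          (Finset.sum_subset (Finset.subset_univ _) (fun i _ hi => by simp [hd, hi])).symm
        have h2 : ∑ i ∈ supp, d i • v i = ∑ i : supp, g i • v ↑i := by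
          rw [← Finset.sum_coe_sort supp (fun i => d i • v i)]
          exact Finset.sum_congr rfl (fun i _ => by simp [hd])
        rw [h1, h2, hg]
      have hdsupp : ∀ i, d i ≠ 0 → i ∈ supp := by
        intro i hi
        by_contra h
        simp [hd, h] at hi
      have hdj : d (j : ι) ≠ 0 := by simp [hd, j.2, hj]
      -- wlog some positive entry
      have key : ∀ d : ι → ℝ, (∑ i, d i • v i = 0) → (∀ i, d i ≠ 0 → i ∈ supp) →
          (∃ i, 0 < d i) →
          ∃ s : Finset ι, LinearIndependent ℝ (fun i : s => v i) ∧
            (∑ i, c i • v i) ∈ coneOf (fun i : s => v i) := by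
        intro d hdsum hdsupp ⟨i₁, hi₁⟩
        set T := Finset.univ.filter (fun i => 0 < d i) with hT
        have hTne : T.Nonempty := ⟨i₁, by simp [hT, hi₁]⟩
        obtain ⟨i₀, hi₀T, hi₀min⟩ := T.exists_min_image (fun i => c i / d i) hTne
        have hdi₀ : 0 < d i₀ := by simpa [hT] using hi₀T
        set t := c i₀ / d i₀ with ht
        have ht0 : 0 ≤ t := div_nonneg (hc i₀) hdi₀.le
        set c' : ι → ℝ := fun i => c i - t * d i with hc'
        have hc'0 : ∀ i, 0 ≤ c' i := by
          intro i
          by_cases hdi : 0 < d i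
          · have : t ≤ c i / d i := hi₀min i (by simp [hT, hdi])
            have := (le_div_iff₀ hdi).mp this
            simp only [hc']; linarith
          · push_neg at hdi
            have : t * d i ≤ 0 := mul_nonpos_of_nonneg_of_nonpos ht0 hdi
            have := hc i
            simp only [hc']; linarith
        have hsum' : ∑ i, c' i • v i = ∑ i, c i • v i := by
          simp only [hc', sub_smul, mul_smul, Finset.sum_sub_distrib, ← Finset.smul_sum, hdsum,
            smul_zero, sub_zero]
        have hcard' : (Finset.univ.filter (fun i => c' i ≠ 0)).card ≤ k := by
          have hsub : Finset.univ.filter (fun i => c' i ≠ 0) ⊆ supp.erase i₀ := by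
            intro i hi
            simp only [Finset.mem_filter] at hi
            refine Finset.mem_erase.mpr ⟨?_, ?_⟩
            · rintro rfl
              apply hi.2
              simp only [hc', ht]
              field_simp
              ring
            · by_contra h
              have hci : c i = 0 := by simpa [hsupp] using h
              have hdi : d i = 0 := by
                by_contra h'; exact h (hdsupp i h')
              apply hi.2; simp [hc', hci, hdi]
          have h1 := Finset.card_le_card hsub
          have h2 : i₀ ∈ supp := by
            by_contra h
            have : d i₀ = 0 := by
              by_contra h'; exact h (hdsupp i₀ h')
            rw [this] at hdi₀; exact lt_irrefl _ hdi₀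
          have := Finset.card_erase_of_mem h2
          omega
        obtain ⟨s, hs, hmem⟩ := ih c' hcard' hc'0
        rw [hsum'] at hmem
        exact ⟨s, hs, hmem⟩
      rcases lt_or_gt_of_ne hdj with hneg | hpos
      · refine key (fun i => -d i) (by simpa using hdsum) (fun i hi => hdsupp i (by simpa using hi))
          ⟨j, by show (0:ℝ) < -d ↑j; linarith⟩
      · exact key d hdsum hdsupp ⟨j, hpos⟩

lemma coneOf_subtype_subset {ι : Type*} [Fintype ι] [DecidableEq ι] (v : ι → X) (s : Finset ι) :
    coneOf (fun i : s => v i) ⊆ coneOf v := by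
  rintro x ⟨c, hc, rfl⟩
  refine ⟨fun i => if h : i ∈ s then c ⟨i, h⟩ else 0, fun i => by
    by_cases h : i ∈ s <;> simp [h, hc], ?_⟩
  rw [show (∑ i, (if h : i ∈ s then c ⟨i, h⟩ else 0) • v i)
      = ∑ i ∈ s, (if h : i ∈ s then c ⟨i, h⟩ else 0) • v i from
    (Finset.sum_subset (Finset.subset_univ _) (fun i _ hi => by simp [hi])).symm,
    ← Finset.sum_coe_sort s]
  exact Finset.sum_congr rfl (fun i _ => by simp)


lemma isClosed_coneOf' {ι : Type*} [Fintype ι] (v : ι → X) : IsClosed (coneOf v) := by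
  classical
  have hun : coneOf v =
      ⋃ s ∈ {s : Finset ι | LinearIndependent ℝ (fun i : s => v i)},
        coneOf (fun i : s => v i) := by
    apply Set.Subset.antisymm
    · rintro x ⟨c, hc, rfl⟩
      obtain ⟨s, hs, hmem⟩ := cara_aux v (Finset.univ.filter (fun i => c i ≠ 0)).card c le_rfl hc
      exact Set.mem_biUnion hs hmem
    · exact Set.iUnion₂_subset fun s _ => coneOf_subtype_subset v s
  rw [hun]
  exact Set.Finite.isClosed_biUnion (Set.toFinite _)
    (fun s hs => isClosed_coneOf_li hs)

lemma span_coe_eq {s : Set X} (h0 : (0:X) ∈ s) :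
    (affineSpan ℝ s : Set X) = (Submodule.span ℝ s : Set X) := by
  rw [← affineSpan_insert_zero, Set.insert_eq_of_mem h0]

lemma intrinsicInterior_eq_span_image {s : Set X} (h0 : (0:X) ∈ s) :
    intrinsicInterior ℝ s = (↑) '' interior ((↑) ⁻¹' s : Set (Submodule.span ℝ s)) := by
  have hset : (affineSpan ℝ s : Set X) = (Submodule.span ℝ s : Set X) := span_coe_eq h0
  let e : (affineSpan ℝ s : Set X) ≃ₜ ((Submodule.span ℝ s : Set X)) := Homeomorph.setCongr hset
  have himg : ∀ y : (affineSpan ℝ s : Set X),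
      (y ∈ interior ((↑) ⁻¹' s : Set (affineSpan ℝ s)) ↔
       e y ∈ interior ((↑) ⁻¹' s : Set (Submodule.span ℝ s))) := by
    intro y
    have : (e y ∈ interior ((↑) ⁻¹' s : Set (Submodule.span ℝ s))) ↔
        y ∈ e ⁻¹' interior ((↑) ⁻¹' s : Set (Submodule.span ℝ s)) := Iff.rfl
    rw [this, Homeomorph.preimage_interior]
    rfl
  ext x
  constructor
  · rintro ⟨y, hy, rfl⟩
    exact ⟨e y, (himg y).1 hy, rfl⟩
  · rintro ⟨z, hz, rfl⟩
    exact ⟨e.symm z, (himg _).2 (by simpa using hz), rfl⟩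

lemma mem_relint_iff {s : Set X} (h0 : (0:X) ∈ s) {x : X} :
    x ∈ intrinsicInterior ℝ s ↔ ∃ hx : x ∈ Submodule.span ℝ s,
      (⟨x, hx⟩ : Submodule.span ℝ s) ∈ interior ((↑) ⁻¹' s : Set (Submodule.span ℝ s)) := by
  rw [intrinsicInterior_eq_span_image h0]
  constructor
  · rintro ⟨y, hy, rfl⟩
    exact ⟨y.2, hy⟩
  · rintro ⟨hx, h⟩
    exact ⟨⟨x, hx⟩, h, rfl⟩

/-- L1: open segment from a relative interior point to a point of the set stays in the
relative interior. -/
lemma openSegment_relint_subset {s : Set X} (hs : Convex ℝ s) (h0 : (0:X) ∈ s) {x y : X}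
    (hx : x ∈ intrinsicInterior ℝ s) (hy : y ∈ s) :
    openSegment ℝ x y ⊆ intrinsicInterior ℝ s := by
  set V := Submodule.span ℝ s with hV
  obtain ⟨hxV, hxint⟩ := (mem_relint_iff h0).mp hx
  have hyV : y ∈ V := Submodule.subset_span hy
  have hconv : Convex ℝ ((↑) ⁻¹' s : Set V) := hs.linear_preimage V.subtype
  have hseg := hconv.openSegment_interior_self_subset_interior hxint
    (show (⟨y, hyV⟩ : V) ∈ (↑) ⁻¹' s from hy)
  rintro z ⟨a, b, ha, hb, hab, rfl⟩
  have hzV : a • x + b • y ∈ V := V.add_mem (V.smul_mem a hxV) (V.smul_mem b hyV)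
  rw [mem_relint_iff h0]
  refine ⟨hzV, ?_⟩
  have : (⟨a • x + b • y, hzV⟩ : V) = a • (⟨x, hxV⟩ : V) + b • ⟨y, hyV⟩ := by
    ext; simp
  rw [this]
  exact hseg ⟨a, b, ha, hb, hab, rfl⟩

/-- L2: a relative interior point is in the open segment from any point of the set to
some other point of the set. -/
lemma relint_extend {s : Set X} (h0 : (0:X) ∈ s) {x y : X}
    (hx : x ∈ intrinsicInterior ℝ s) (hy : y ∈ s) :
    ∃ z ∈ s, x ∈ openSegment ℝ y z := by
  set V := Submodule.span ℝ s with hV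
  obtain ⟨hxV, hxint⟩ := (mem_relint_iff h0).mp hx
  have hyV : y ∈ V := Submodule.subset_span hy
  set x' : V := ⟨x, hxV⟩
  set y' : V := ⟨y, hyV⟩
  have hcont : Continuous (fun t : ℝ => x' + t • (x' - y')) := by continuity
  have h0mem : (fun t : ℝ => x' + t • (x' - y')) 0 ∈ interior ((↑) ⁻¹' s : Set V) := by
    simpa using hxint
  have hev : ∀ᶠ t in nhds (0:ℝ), (x' + t • (x' - y')) ∈ interior ((↑) ⁻¹' s : Set V) :=
    hcont.continuousAt.eventually_mem (isOpen_interior.mem_nhds h0mem)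
  obtain ⟨ε, hε, hball⟩ := Metric.eventually_nhds_iff.mp hev
  set t := ε / 2
  have ht : 0 < t := by positivity
  have hzint : (x' + t • (x' - y')) ∈ interior ((↑) ⁻¹' s : Set V) := by
    apply hball
    simp only [dist_zero_right, Real.norm_eq_abs, abs_of_pos ht]
    simpa [t] using half_lt_self hε
  set z' : V := x' + t • (x' - y')
  refine ⟨(z' : X), (interior_subset hzint : z' ∈ (↑) ⁻¹' s), ?_⟩
  refine ⟨t / (1 + t), 1 / (1 + t), by positivity, by positivity, ?_, ?_⟩
  · field_simp
    ring
  · have hz : (z' : X) = x + t • (x - y) := by simp [z', x', y', smul_sub]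
    rw [hz]
    have h1t : (1 + t) ≠ 0 := by positivity
    have haux : (t / (1 + t)) • y + (1 / (1 + t)) • (x + t • (x - y))
        = ((t / (1 + t)) - (1 / (1 + t)) * t) • y + ((1 / (1 + t)) + (1 / (1 + t)) * t) • x := by
      module
    rw [haux]
    have h1 : (t / (1 + t)) - (1 / (1 + t)) * t = 0 := by field_simp; ring
    have h2 : (1 / (1 + t)) + (1 / (1 + t)) * t = 1 := by field_simp
    rw [h1, h2, zero_smul, one_smul, zero_add]

/-- Supporting functional at a non-relative-interior point of a convex cone. -/
lemma support_functional {G : Set X} (hconv : Convex ℝ G) (h0 : (0:X) ∈ G)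
    (hcone : ∀ t : ℝ, 0 ≤ t → ∀ y ∈ G, t • y ∈ G) {x : X} (hxG : x ∈ G)
    (hx : x ∉ intrinsicInterior ℝ G) :
    ∃ l : X →ₗ[ℝ] ℝ, (∀ y ∈ G, l y ≤ 0) ∧ l x = 0 ∧ ∃ y ∈ G, l y < 0 := by
  classical
  set V := Submodule.span ℝ G with hV
  set G' : Set V := (↑) ⁻¹' G with hG'
  have hG'conv : Convex ℝ G' := hconv.linear_preimage V.subtype
  have h0' : (0 : V) ∈ G' := h0
  -- span of G' is top
  have hspan_top : Submodule.span ℝ G' = ⊤ := by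
    apply Submodule.map_injective_of_injective (show Function.Injective V.subtype from
      Subtype.coe_injective)
    rw [Submodule.map_span, Submodule.map_subtype_top]
    have himg : V.subtype '' G' = G := by
      apply Set.image_preimage_eq_of_subset
      intro g hg
      rw [Submodule.coe_subtype, Subtype.range_coe]
      exact Submodule.subset_span hg
    rw [himg, hV]
  -- affine span of G' is top
  have haff_top : affineSpan ℝ G' = ⊤ := by
    apply SetLike.coe_injective
    rw [span_coe_eq h0', hspan_top]
    simp
  -- interior of G' is nonempty
  have hint_ne : (interior G').Nonempty :=
    (Convex.interior_nonempty_iff_affineSpan_eq_top hG'conv).mpr haff_top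
  obtain ⟨y0', hy0'⟩ := hint_ne
  have hxV : x ∈ V := Submodule.subset_span hxG
  set x' : V := ⟨x, hxV⟩
  have hx' : x' ∉ interior G' := by
    intro h
    exact hx ((mem_relint_iff h0).mpr ⟨hxV, h⟩)
  obtain ⟨f, hf⟩ := geometric_hahn_banach_open_point (hG'conv.interior) isOpen_interior hx'
  -- f ≤ f x' on all of G'
  have hfle : ∀ g ∈ G', f g ≤ f x' := by
    intro g hg
    have hseg : openSegment ℝ y0' g ⊆ interior G' :=
      hG'conv.openSegment_interior_self_subset_interior hy0' hg
    have hgcl : g ∈ closure (openSegment ℝ y0' g) := by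
      rw [closure_openSegment]
      exact right_mem_segment ℝ y0' g
    have : g ∈ closure {z : V | f z ≤ f x'} := by
      apply closure_mono (hseg.trans ?_) hgcl
      intro z hz
      exact (hf z hz).le
    have hcl : IsClosed {z : V | f z ≤ f x'} := isClosed_le f.continuous continuous_const
    exact hcl.closure_subset this
  -- cone structure forces f x' = 0
  have hx'0 : f x' = 0 := by
    have h2x : ((2:ℝ) • x) ∈ G := hcone 2 (by norm_num) x hxG
    have h2xV : (2:ℝ) • x ∈ V := V.smul_mem _ hxV
    have h2x' : (⟨(2:ℝ) • x, h2xV⟩ : V) ∈ G' := h2x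
    have e1 : (⟨(2:ℝ) • x, h2xV⟩ : V) = (2:ℝ) • x' := by ext; simp; rfl
    have := hfle _ h2x'
    rw [e1, map_smul] at this
    have h0le : (0:ℝ) ≤ f x' := by simpa using hfle 0 h0'
    simp only [smul_eq_mul] at this
    linarith
  -- build the ambient functional
  set l : X →ₗ[ℝ] ℝ := f.toLinearMap ∘ₗ (V.orthogonalProjectionOnto).toLinearMap with hl
  have hlV : ∀ (z : X) (hz : z ∈ V), l z = f ⟨z, hz⟩ := by
    intro z hz
    have : V.orthogonalProjectionOnto z = ⟨z, hz⟩ := by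
      rw [← Submodule.orthogonalProjectionOnto_mem_subspace_eq_self (K := V) ⟨z, hz⟩]
    simp [hl, this]
  refine ⟨l, ?_, ?_, ?_⟩
  · intro y hy
    have hyV : y ∈ V := Submodule.subset_span hy
    rw [hlV y hyV]
    have := hfle ⟨y, hyV⟩ hy
    rw [hx'0] at this
    exact this
  · rw [hlV x hxV, hx'0]
  · refine ⟨(y0' : X), (interior_subset hy0' : y0' ∈ G'), ?_⟩
    rw [hlV _ y0'.2]
    have := hf y0' hy0'
    rw [hx'0] at this
    simpa using this

lemma sep_facts {ι : Type*} [Fintype ι] (v : ι → X) (lam : X →ₗ[ℝ] ℝ) :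
    Convex ℝ {y ∈ coneOf v | lam y = 0} ∧ (0:X) ∈ {y ∈ coneOf v | lam y = 0} ∧
      (∀ t : ℝ, 0 ≤ t → ∀ y ∈ {y ∈ coneOf v | lam y = 0}, t • y ∈ {y ∈ coneOf v | lam y = 0}) := by
  refine ⟨?_, ⟨zero_mem_coneOf v, by simp⟩, ?_⟩
  · have : {y ∈ coneOf v | lam y = 0} = coneOf v ∩ {y | lam y = 0} := rfl
    rw [this]
    exact (convex_coneOf v).inter (convex_hyperplane lam.isLinear 0)
  · rintro t ht y ⟨hy, hy0⟩
    exact ⟨smul_mem_coneOf hy ht, by simp [hy0]⟩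

lemma face_step {ι : Type*} [Fintype ι] [DecidableEq ι] (v : ι → X) (lam : X →ₗ[ℝ] ℝ)
    (hlam : ∀ y ∈ coneOf v, lam y ≤ 0) {x : X}
    (hxm : x ∈ {y ∈ coneOf v | lam y = 0})
    (hrel : x ∉ intrinsicInterior ℝ {y ∈ coneOf v | lam y = 0}) :
    ∃ l : X →ₗ[ℝ] ℝ, (∀ y ∈ coneOf v, l y ≤ 0) ∧
      x ∈ {y ∈ coneOf v | l y = 0} ∧
      Module.finrank ℝ (Submodule.span ℝ {y ∈ coneOf v | l y = 0}) <
        Module.finrank ℝ (Submodule.span ℝ {y ∈ coneOf v | lam y = 0}) := by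
  classical
  set G := {y ∈ coneOf v | lam y = 0} with hG
  obtain ⟨hGconv, hG0, hGcone⟩ := sep_facts v lam
  obtain ⟨f, hf, hfx, y0, hy0G, hfy0⟩ := support_functional hGconv hG0 hGcone hxm hrel
  set N : ℝ := 1 + ∑ i, (if lam (v i) < 0 then max 0 (f (v i) / (-(lam (v i)))) else 0) with hN
  have hterms : ∀ i, 0 ≤ (if lam (v i) < 0 then max 0 (f (v i) / (-(lam (v i)))) else 0) := by
    intro i; split <;> simp [le_max_left]
  have hN1 : 1 ≤ N := by
    rw [hN]
    have hs : (0:ℝ) ≤ ∑ i, (if lam (v i) < 0 then max 0 (f (v i) / (-(lam (v i)))) else 0) :=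
      Finset.sum_nonneg (fun i _ => hterms i)
    linarith
  have hNkey : ∀ i, lam (v i) < 0 → N * lam (v i) + f (v i) < 0 := by
    intro i hi
    have hterm : f (v i) / (-(lam (v i))) ≤
        ∑ j, (if lam (v j) < 0 then max 0 (f (v j) / (-(lam (v j)))) else 0) := by
      calc f (v i) / (-(lam (v i))) ≤ max 0 (f (v i) / (-(lam (v i)))) := le_max_right _ _
        _ = (if lam (v i) < 0 then max 0 (f (v i) / (-(lam (v i)))) else 0) := by rw [if_pos hi]
        _ ≤ _ := Finset.single_le_sum (fun j _ => hterms j) (Finset.mem_univ i)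
    have hq : f (v i) / (-(lam (v i))) < N := by rw [hN]; linarith
    have hpos : 0 < -(lam (v i)) := by linarith
    rw [div_lt_iff₀ hpos] at hq
    nlinarith
  have hvmem : ∀ i, v i ∈ coneOf v := fun i => mem_coneOf_self v i
  set l : X →ₗ[ℝ] ℝ := N • lam + f with hl
  have hlvi : ∀ i, l (v i) ≤ 0 := by
    intro i
    have happ : l (v i) = N * lam (v i) + f (v i) := by
      simp [hl]
    rcases lt_or_eq_of_le (hlam _ (hvmem i)) with h | h
    · rw [happ]; exact (hNkey i h).le
    · have hvG : v i ∈ G := ⟨hvmem i, h⟩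
      rw [happ, h, mul_zero, zero_add]
      exact hf _ hvG
  have hsum_l : ∀ (c : ι → ℝ), l (∑ i, c i • v i) = ∑ i, c i * l (v i) := by
    intro c; rw [map_sum]; exact Finset.sum_congr rfl (fun i _ => by rw [map_smul]; rfl)
  have hlD : ∀ y ∈ coneOf v, l y ≤ 0 := by
    rintro y ⟨c, hc, rfl⟩
    rw [hsum_l]
    exact Finset.sum_nonpos (fun i _ => mul_nonpos_of_nonneg_of_nonpos (hc i) (hlvi i))
  have hxl : x ∈ {y ∈ coneOf v | l y = 0} := by
    refine ⟨hxm.1, ?_⟩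
    have h1 : lam x = 0 := hxm.2
    simp [hl, h1, hfx]
  -- the new face is contained in G ∩ ker f
  have hsub : ∀ y ∈ {y ∈ coneOf v | l y = 0}, y ∈ G ∧ f y = 0 := by
    rintro y ⟨⟨c, hc, rfl⟩, hly⟩
    rw [hsum_l] at hly
    have hall : ∀ i ∈ Finset.univ, c i * l (v i) = 0 :=
      (Finset.sum_eq_zero_iff_of_nonpos
        (fun i _ => mul_nonpos_of_nonneg_of_nonpos (hc i) (hlvi i))).mp hly
    have hlam0 : ∀ i, c i * lam (v i) = 0 := by
      intro i
      rcases eq_or_lt_of_le (hc i) with h | h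
      · rw [← h, zero_mul]
      · rcases lt_or_eq_of_le (hlam _ (hvmem i)) with h' | h'
        · exfalso
          have : c i * l (v i) < 0 :=
            mul_neg_of_pos_of_neg h (by simpa [hl] using hNkey i h')
          rw [hall i (Finset.mem_univ i)] at this
          exact lt_irrefl _ this
        · rw [h', mul_zero]
    have hlamy : lam (∑ i, c i • v i) = 0 := by
      rw [map_sum]
      rw [Finset.sum_congr rfl (fun i _ => (show lam ((c i) • v i) = c i * lam (v i) by
        rw [map_smul]; rfl))]
      exact Finset.sum_eq_zero (fun i _ => hlam0 i)
    have hyG : (∑ i, c i • v i) ∈ G := ⟨⟨c, hc, rfl⟩, hlamy⟩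
    refine ⟨hyG, ?_⟩
    have hexp : l (∑ i, c i • v i) = N * lam (∑ i, c i • v i) + f (∑ i, c i • v i) := by
      simp only [hl, LinearMap.add_apply, LinearMap.smul_apply, smul_eq_mul]
    rw [hsum_l, hly, hlamy, mul_zero, zero_add] at hexp
    exact hexp.symm
  -- dimension drop
  refine ⟨l, hlD, hxl, ?_⟩
  have hsub' : {y ∈ coneOf v | l y = 0} ⊆
      ((Submodule.span ℝ G ⊓ LinearMap.ker f : Submodule ℝ X) : Set X) := by
    intro y hy
    obtain ⟨hyG, hyf⟩ := hsub y hy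
    exact ⟨Submodule.subset_span hyG, hyf⟩
  have hle : Submodule.span ℝ {y ∈ coneOf v | l y = 0} ≤
      Submodule.span ℝ G ⊓ LinearMap.ker f := Submodule.span_le.mpr hsub'
  have hlt : Submodule.span ℝ G ⊓ LinearMap.ker f < Submodule.span ℝ G := by
    refine lt_of_le_of_ne inf_le_left ?_
    intro h
    have hy0span : y0 ∈ Submodule.span ℝ G := Submodule.subset_span hy0G
    rw [← h] at hy0span
    have : f y0 = 0 := hy0span.2
    rw [this] at hfy0
    exact lt_irrefl _ hfy0
  calc Module.finrank ℝ (Submodule.span ℝ {y ∈ coneOf v | l y = 0})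
      ≤ Module.finrank ℝ (Submodule.span ℝ G ⊓ LinearMap.ker f : Submodule ℝ X) :=
        Submodule.finrank_mono hle
    _ < Module.finrank ℝ (Submodule.span ℝ G) := Submodule.finrank_lt_finrank_of_lt hlt

lemma exists_relint_face {ι : Type*} [Fintype ι] [DecidableEq ι] (v : ι → X) {x : X} :
    ∀ (k : ℕ) (lam : X →ₗ[ℝ] ℝ), (∀ y ∈ coneOf v, lam y ≤ 0) →
      x ∈ {y ∈ coneOf v | lam y = 0} →
      Module.finrank ℝ (Submodule.span ℝ {y ∈ coneOf v | lam y = 0}) ≤ k →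
      ∃ l : X →ₗ[ℝ] ℝ, (∀ y ∈ coneOf v, l y ≤ 0) ∧
        x ∈ intrinsicInterior ℝ {y ∈ coneOf v | l y = 0} := by
  intro k
  induction k with
  | zero =>
    intro lam hlam hx hrank
    by_cases hrel : x ∈ intrinsicInterior ℝ {y ∈ coneOf v | lam y = 0}
    · exact ⟨lam, hlam, hrel⟩
    · obtain ⟨l, hl, hxl, hlt⟩ := face_step v lam hlam hx hrel
      omega
  | succ k ih =>
    intro lam hlam hx hrank
    by_cases hrel : x ∈ intrinsicInterior ℝ {y ∈ coneOf v | lam y = 0}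
    · exact ⟨lam, hlam, hrel⟩
    · obtain ⟨l, hl, hxl, hlt⟩ := face_step v lam hlam hx hrel
      exact ih l hl hxl (by omega)

end Helpers

end StmtAux

/-- A fan `E` refines a fan `F` iff every maximal cone of `E` has its
relative interior contained in the relative interior of some cone of `F`. -/
theorem stmt3 {n : ℕ} (E F : PolyFan n) :
    (∀ C ∈ E.cones, ∃ D ∈ F.cones, relint C ⊆ relint D) ↔
    (∀ C, E.IsMaximal C → ∃ D ∈ F.cones, relint C ⊆ relint D) := by
  constructor
  · intro h C hC
    exact h C hC.1
  · intro h C hC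
    classical
    have hpolyfacts : ∀ {D : Set (EuclideanSpace ℝ (Fin n))}, IsPolyCone D →
        Convex ℝ D ∧ (0 : EuclideanSpace ℝ (Fin n)) ∈ D ∧ IsClosed D ∧
          (∀ t : ℝ, 0 ≤ t → ∀ y ∈ D, t • y ∈ D) := by
      rintro D ⟨m, v, rfl⟩
      exact ⟨convex_coneOf v, zero_mem_coneOf v, isClosed_coneOf' v,
        fun t ht y hy => smul_mem_coneOf hy ht⟩
    obtain ⟨hCconv, hC0, hCcl, hCcone⟩ := hpolyfacts (E.poly C hC)
    -- find a maximal cone containing C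
    have hfin : {D | D ∈ E.cones ∧ C ⊆ D}.Finite := E.finite.subset (fun D hD => hD.1)
    obtain ⟨M, hMmem, hMmax⟩ :=
      Set.Finite.exists_maximalFor id {D | D ∈ E.cones ∧ C ⊆ D} hfin ⟨C, hC, subset_rfl⟩
    have hCM : C ⊆ M := hMmem.2
    have hMismax : E.IsMaximal M := by
      refine ⟨hMmem.1, fun D hD hMD => ?_⟩
      exact subset_antisymm (hMmax (j := D) ⟨hD, hCM.trans hMD⟩ hMD) hMD
    obtain ⟨hMconv, hM0, hMcl, hMcone⟩ := hpolyfacts (E.poly M hMmem.1)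
    obtain ⟨D, hD, hMD⟩ := h M hMismax
    obtain ⟨mD, vD, hDeq⟩ := F.poly D hD
    have hDeq' : D = coneOf vD := hDeq
    clear hDeq
    subst hDeq'
    obtain ⟨hDconv, hD0, hDcl, hDcone⟩ := hpolyfacts ⟨mD, vD, rfl⟩
    have hDcl' : IsClosed (coneOf vD) := hDcl
    have hMD' : intrinsicInterior ℝ M ⊆ intrinsicInterior ℝ (coneOf vD) := hMD
    -- C ⊆ D
    have hCD : C ⊆ coneOf vD := by
      obtain ⟨x0, hx0⟩ := Set.Nonempty.intrinsicInterior hMconv ⟨0, hM0⟩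
      intro y hy
      have hseg : openSegment ℝ x0 y ⊆ coneOf vD := fun z hz =>
        intrinsicInterior_subset (hMD' (openSegment_relint_subset hMconv hM0 hx0 (hCM hy) hz))
      have hycl : y ∈ closure (openSegment ℝ x0 y) := by
        rw [closure_openSegment]; exact right_mem_segment ℝ x0 y
      have : y ∈ closure (coneOf vD) := closure_mono hseg hycl
      rwa [hDcl'.closure_eq] at this
    -- a relative interior point of C
    obtain ⟨x, hxrel⟩ := Set.Nonempty.intrinsicInterior hCconv ⟨0, hC0⟩
    have hxC : x ∈ C := intrinsicInterior_subset hxrel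
    -- find the face of D whose relative interior contains x
    have hx0mem : x ∈ {y ∈ coneOf vD | (0 : EuclideanSpace ℝ (Fin n) →ₗ[ℝ] ℝ) y = 0} :=
      ⟨hCD hxC, rfl⟩
    obtain ⟨l, hlD, hxrelG⟩ := exists_relint_face vD
      (Module.finrank ℝ (Submodule.span ℝ
        {y ∈ coneOf vD | (0 : EuclideanSpace ℝ (Fin n) →ₗ[ℝ] ℝ) y = 0}))
      (0 : EuclideanSpace ℝ (Fin n) →ₗ[ℝ] ℝ) (fun y _ => le_rfl) hx0mem le_rfl
    set G := {y ∈ coneOf vD | l y = 0} with hGdef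
    obtain ⟨hGconv, hG0, hGcone⟩ := sep_facts vD l
    have hGmem : G ∈ F.cones :=
      F.faces_mem (coneOf vD) hD G (Or.inr ⟨l, hlD, rfl⟩)
    have hxG : x ∈ G := intrinsicInterior_subset hxrelG
    have hlx : l x = 0 := hxG.2
    -- C is contained in the face G
    have hCG : C ⊆ G := by
      intro y hy
      obtain ⟨z, hzC, hxseg⟩ := relint_extend hC0 hxrel hy
      obtain ⟨a, b, ha, hb, hab, hxeq⟩ := hxseg
      have hly : l y ≤ 0 := hlD y (hCD hy)
      have hlz : l z ≤ 0 := hlD z (hCD hzC)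
      have hcal : a * l y + b * l z = l x := by
        rw [← hxeq]; simp
      rw [hlx] at hcal
      have h1 : a * l y ≤ 0 := mul_nonpos_of_nonneg_of_nonpos ha.le hly
      have h2 : b * l z ≤ 0 := mul_nonpos_of_nonneg_of_nonpos hb.le hlz
      have h3 : a * l y = 0 := by linarith
      have hly0 : l y = 0 := by
        rcases mul_eq_zero.mp h3 with h | h
        · exact absurd h (ne_of_gt ha)
        · exact h
      exact ⟨hCD hy, hly0⟩
    -- conclude
    refine ⟨G, hGmem, ?_⟩
    intro w hw
    obtain ⟨z, hzC, hwseg⟩ := relint_extend hC0 hw hxC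
    exact openSegment_relint_subset hGconv hG0 hxrelG (hCG hzC) hwseg
end

section
/- Fix c ∈ N and ω ∈ R^n with 0 = ω_1 = ... = ω_{n−m+1} and c·ω_i < ω_{i+1} for i = n−m+1, ..., n−1. Let ≻ be the graded reverse lexicographic order with x_1 ≻ ... ≻ x_n, and let ≻_ω be its refinement by ω-weight (first compare by minimal ω-weight, ties broken by ≻). Then for any two monomials x^ν, x^μ of the same total degree t ≤ c, x^ν ≻ x^μ if and only if x^ν ≻_ω x^μ. -/
/-- The `ω`-weight `ω · ν` of a monomial exponent vector `ν`. -/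
noncomputable def wt {n : ℕ} (ω : Fin n → ℝ) (ν : Fin n → ℕ) : ℝ :=
  ∑ i, ω i * (ν i : ℝ)

/-- `x^ν ≻ x^μ` in the (graded) reverse lexicographic order with
`x_1 ≻ … ≻ x_n` (for exponent vectors of equal total degree): the last index where
they differ has a strictly smaller exponent in `ν`. -/
def RevlexGT {n : ℕ} (ν μ : Fin n → ℕ) : Prop :=
  ∃ k : Fin n, ν k < μ k ∧ ∀ j, k < j → ν j = μ j

lemma revlex_trich {n : ℕ} {ν μ : Fin n → ℕ} (h : ν ≠ μ) :
    RevlexGT ν μ ∨ RevlexGT μ ν := by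
  classical
  set S := Finset.univ.filter (fun i => ν i ≠ μ i) with hS
  have hSne : S.Nonempty := by
    by_contra h'
    apply h
    funext i
    by_contra hi
    exact h' ⟨i, by simp [hS, hi]⟩
  set k := S.max' hSne with hk
  have hkmem : ν k ≠ μ k := by
    have := S.max'_mem hSne
    simpa [hS] using this
  have hafter : ∀ j, k < j → ν j = μ j := by
    intro j hj
    by_contra h'
    have : j ∈ S := by simp [hS, h']
    exact absurd hj (not_lt.2 (S.le_max' j this))
  rcases lt_or_gt_of_ne hkmem with h1 | h1
  · exact Or.inl ⟨k, h1, hafter⟩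
  · exact Or.inr ⟨k, h1, fun j hj => (hafter j hj).symm⟩

lemma omega_nonneg {n m : ℕ} (hmn : m < n) (c : ℕ) (ω : Fin n → ℝ)
    (hzero : ∀ i : Fin n, i.val ≤ n - m → ω i = 0)
    (hgrow : ∀ i j : Fin n, n - m ≤ i.val → j.val = i.val + 1 → (c : ℝ) * ω i < ω j) :
    ∀ i : Fin n, 0 ≤ ω i := by
  have H : ∀ v, ∀ h : v < n, 0 ≤ ω ⟨v, h⟩ := by
    intro v
    induction v using Nat.strong_induction_on with
    | _ v ih =>
      intro h
      rcases le_or_gt v (n - m) with hv | hv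
      · rw [hzero ⟨v, h⟩ hv]
      · have hv1 : v - 1 < n := by omega
        have hg := hgrow ⟨v - 1, hv1⟩ ⟨v, h⟩ (by simp; omega) (by simp; omega)
        have h0 := ih (v - 1) (by omega) hv1
        have hc : (0 : ℝ) ≤ (c : ℝ) := Nat.cast_nonneg c
        nlinarith
  intro i
  have := H i.val i.isLt
  simpa using this

lemma omega_mono {n m : ℕ} (hmn : m < n) (c : ℕ) (ω : Fin n → ℝ)
    (hzero : ∀ i : Fin n, i.val ≤ n - m → ω i = 0)
    (hgrow : ∀ i j : Fin n, n - m ≤ i.val → j.val = i.val + 1 → (c : ℝ) * ω i < ω j)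
    (hc : 1 ≤ c) : ∀ i j : Fin n, i.val ≤ j.val → ω i ≤ ω j := by
  have hnn := omega_nonneg hmn c ω hzero hgrow
  have step : ∀ i j : Fin n, j.val = i.val + 1 → ω i ≤ ω j := by
    intro i j hij
    rcases le_or_gt j.val (n - m) with hj | hj
    · rw [hzero i (by omega), hzero j hj]
    · have hg := hgrow i j (by omega) hij
      have h0 := hnn i
      have hc' : (1 : ℝ) ≤ (c : ℝ) := by exact_mod_cast hc
      nlinarith
  have H : ∀ d, ∀ i j : Fin n, i.val + d = j.val → ω i ≤ ω j := by
    intro d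
    induction d with
    | zero =>
      intro i j hij
      have : i = j := Fin.ext (by omega)
      rw [this]
    | succ d ih =>
      intro i j hij
      have hj1 : j.val - 1 < n := by omega
      set j' : Fin n := ⟨j.val - 1, hj1⟩ with hj'
      have h1 : ω i ≤ ω j' := ih i j' (by simp [hj']; omega)
      have h2 : ω j' ≤ ω j := step j' j (by simp [hj']; omega)
      linarith
  intro i j hij
  exact H (j.val - i.val) i j (by omega)

lemma key_le {n m : ℕ} (hm : 0 < m) (hmn : m < n) (c : ℕ) (ω : Fin n → ℝ)
    (hzero : ∀ i : Fin n, i.val ≤ n - m → ω i = 0)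
    (hgrow : ∀ i j : Fin n, n - m ≤ i.val → j.val = i.val + 1 → (c : ℝ) * ω i < ω j)
    {t : ℕ} (ht : t ≤ c) {ν μ : Fin n → ℕ} (hν : (∑ i, ν i) = t) (hμ : (∑ i, μ i) = t)
    (h : RevlexGT ν μ) : wt ω ν ≤ wt ω μ := by
  classical
  have hnn := omega_nonneg hmn c ω hzero hgrow
  obtain ⟨k, hk, hafter⟩ := h
  rcases le_or_gt k.val (n - m) with hkle | hkgt
  · apply le_of_eq
    unfold wt
    apply Finset.sum_congr rfl
    intro i _
    rcases le_or_gt i k with hik | hik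
    · have : i.val ≤ n - m := le_trans (Fin.le_iff_val_le_val.mp hik) hkle
      rw [hzero i this]; ring
    · rw [hafter i hik]
  · -- c ≥ 1
    have hc : 1 ≤ c := by
      by_contra hc0
      have hc' : c = 0 := by omega
      have ht0 : t = 0 := by omega
      have hμk : μ k ≤ ∑ i, μ i :=
        Finset.single_le_sum (f := fun i => μ i) (fun _ _ => Nat.zero_le _) (Finset.mem_univ k)
      omega
    have hmono := omega_mono hmn c ω hzero hgrow hc
    have hk1 : k.val - 1 < n := by omega
    set k' : Fin n := ⟨k.val - 1, hk1⟩ with hk'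
    have hgk := hgrow k' k (by simp [hk']; omega) (by simp [hk']; omega)
    set f : Fin n → ℝ := fun i => ω i * ((μ i : ℝ) - (ν i : ℝ)) with hf
    have hsum : wt ω μ - wt ω ν = ∑ i, f i := by
      unfold wt
      rw [← Finset.sum_sub_distrib]
      apply Finset.sum_congr rfl
      intro i _
      simp [hf]; ring
    have h1 : ∑ i, f i = ∑ i ∈ Finset.Iic k, f i := by
      symm
      apply Finset.sum_subset (Finset.subset_univ _)
      intro i _ hi
      have hki : k < i := by simpa using hi
      simp [hf, hafter i hki]
    have h2 : ∑ i ∈ Finset.Iic k, f i = f k + ∑ i ∈ Finset.Iio k, f i := by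
      rw [← Finset.Iio_insert, Finset.sum_insert (by simp)]
    have hfk : ω k ≤ f k := by
      have hνμ : (ν k : ℝ) + 1 ≤ (μ k : ℝ) := by exact_mod_cast hk
      have := hnn k
      simp only [hf]
      nlinarith
    have hb : ∀ i ∈ Finset.Iio k, -(ω k' * (ν i : ℝ)) ≤ f i := by
      intro i hi
      have hik : i < k := Finset.mem_Iio.mp hi
      have hiω : ω i ≤ ω k' := hmono i k' (by simp [hk']; omega)
      have h0 : 0 ≤ ω i * (μ i : ℝ) := mul_nonneg (hnn i) (Nat.cast_nonneg _)
      have h3 : ω i * (ν i : ℝ) ≤ ω k' * (ν i : ℝ) :=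
        mul_le_mul_of_nonneg_right hiω (Nat.cast_nonneg _)
      simp only [hf]
      nlinarith
    have hsub : ∑ i ∈ Finset.Iio k, (ν i : ℝ) ≤ (c : ℝ) := by
      have h4 : ∑ i ∈ Finset.Iio k, ν i ≤ ∑ i, ν i :=
        Finset.sum_le_sum_of_subset (Finset.subset_univ _)
      have : ∑ i ∈ Finset.Iio k, ν i ≤ c := by omega
      calc ∑ i ∈ Finset.Iio k, (ν i : ℝ) = ((∑ i ∈ Finset.Iio k, ν i : ℕ) : ℝ) := by
            rw [Nat.cast_sum]
        _ ≤ (c : ℝ) := by exact_mod_cast this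
    have h3 : -(ω k' * (c : ℝ)) ≤ ∑ i ∈ Finset.Iio k, f i := by
      have hA : ∑ i ∈ Finset.Iio k, -(ω k' * (ν i : ℝ)) ≤ ∑ i ∈ Finset.Iio k, f i :=
        Finset.sum_le_sum hb
      have hB : ∑ i ∈ Finset.Iio k, -(ω k' * (ν i : ℝ))
          = -(ω k' * ∑ i ∈ Finset.Iio k, (ν i : ℝ)) := by
        simp [Finset.mul_sum]
      have hk'nn := hnn k'
      have : ω k' * ∑ i ∈ Finset.Iio k, (ν i : ℝ) ≤ ω k' * (c : ℝ) :=
        mul_le_mul_of_nonneg_left hsub hk'nn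
      linarith
    have : 0 ≤ ∑ i, f i := by
      rw [h1, h2]
      linarith
    linarith

/-- for `ω` with `0 = ω_1 = … = ω_{n-m+1}` and `c·ω_i < ω_{i+1}` for
`i = n-m+1, …, n-1`, the reverse lexicographic order `≻` and its refinement `≻_ω`
(compare first by minimal `ω`-weight, break ties by `≻`) agree on monomials of any
total degree `t ≤ c`. -/
theorem stmt8 {n m : ℕ} (hm : 0 < m) (hmn : m < n) (c : ℕ) (ω : Fin n → ℝ)
    (hzero : ∀ i : Fin n, i.val ≤ n - m → ω i = 0)
    (hgrow : ∀ i j : Fin n, n - m ≤ i.val → j.val = i.val + 1 → (c : ℝ) * ω i < ω j) :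
    ∀ t : ℕ, t ≤ c → ∀ ν μ : Fin n → ℕ, (∑ i, ν i) = t → (∑ i, μ i) = t →
      (RevlexGT ν μ ↔
        (wt ω ν < wt ω μ ∨ (wt ω ν = wt ω μ ∧ RevlexGT ν μ))) := by
  intro t ht ν μ hν hμ
  constructor
  · intro h
    have hle := key_le hm hmn c ω hzero hgrow ht hν hμ h
    rcases lt_or_eq_of_le hle with h1 | h1
    · exact Or.inl h1
    · exact Or.inr ⟨h1, h⟩
  · rintro (h | ⟨_, h⟩)
    · by_contra hrev
      have hne : ν ≠ μ := by
        intro e; rw [e] at h; exact lt_irrefl _ h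
      rcases revlex_trich hne with h1 | h1
      · exact hrev h1
      · have := key_le hm hmn c ω hzero hgrow ht hμ hν h1
        linarith
    · exact h
end

section
/- Let ν, μ ∈ N^n with |ν| = |μ| = t, let k be the largest index with ν_k ≠ μ_k, assume ν_k < μ_k and ν_j = μ_j = 0 for j > k. Let ω ∈ R^n satisfy 0 ≤ ω_1 ≤ ... ≤ ω_n with c·ω_{k−1} < ω_k, where t ≤ c. Then ω·ν < ω·μ. -/
/-- the weight-comparison inequality. If `ν, μ` have equal total degree
`t ≤ c`, vanish beyond index `k`, `ν_k < μ_k`, and `ω` is a nonnegative nondecreasing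
weight vector with `c·ω_{k-1} < ω_k`, then `ω · ν < ω · μ`. -/
theorem stmt9 {n : ℕ} (t c : ℕ) (htc : t ≤ c) (ν μ : Fin n → ℕ)
    (hν : (∑ i, ν i) = t) (hμ : (∑ i, μ i) = t)
    (k : ℕ) (hk : k < n) (hk0 : 0 < k)
    (hvanish : ∀ j : Fin n, k < j.val → ν j = 0 ∧ μ j = 0)
    (hdiff : ν ⟨k, hk⟩ < μ ⟨k, hk⟩)
    (ω : Fin n → ℝ) (hnn : ∀ i, 0 ≤ ω i)
    (hmono : ∀ i j : Fin n, i ≤ j → ω i ≤ ω j)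
    (hcw : (c : ℝ) * ω ⟨k - 1, by omega⟩ < ω ⟨k, hk⟩) :
    ∑ i, ω i * (ν i : ℝ) < ∑ i, ω i * (μ i : ℝ) := by
  set K : Fin n := ⟨k, hk⟩ with hKdef
  set K' : Fin n := ⟨k - 1, by omega⟩ with hK'def
  have hνK : ν K ≤ t := hν ▸ Finset.single_le_sum (fun i _ => Nat.zero_le _) (Finset.mem_univ K)
  have hsum_erase : ∑ i ∈ Finset.univ.erase K, ν i = t - ν K := by
    have := Finset.add_sum_erase Finset.univ ν (Finset.mem_univ K)
    omega
  -- bound the ν sum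
  have h1 : ∑ i ∈ Finset.univ.erase K, ω i * (ν i : ℝ)
      ≤ ω K' * ((t : ℝ) - ν K) := by
    have : ω K' * ((t : ℝ) - ν K) = ∑ i ∈ Finset.univ.erase K, ω K' * (ν i : ℝ) := by
      rw [← Finset.mul_sum]
      congr 1
      rw [← Nat.cast_sum, hsum_erase, Nat.cast_sub hνK]
    rw [this]
    apply Finset.sum_le_sum
    intro i hi
    rcases Nat.lt_trichotomy i.val k with hlt | heq | hgt
    · exact mul_le_mul_of_nonneg_right (hmono i K' (by simp [hK'def, Fin.le_def]; omega))
        (by positivity)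
    · exact absurd (Fin.ext heq : i = K) (Finset.ne_of_mem_erase hi)
    · simp [(hvanish i hgt).1]
  have h2 : ∑ i, ω i * (ν i : ℝ)
      = ∑ i ∈ Finset.univ.erase K, ω i * (ν i : ℝ) + ω K * ν K := by
    rw [Finset.sum_erase_add _ _ (Finset.mem_univ K)]
  have h3 : ω K' * ((t : ℝ) - ν K) ≤ (c : ℝ) * ω K' := by
    rw [mul_comm]
    apply mul_le_mul_of_nonneg_right _ (hnn K')
    have : ((t : ℝ) - ν K) ≤ (c : ℝ) := by
      have : (t : ℝ) ≤ c := by exact_mod_cast htc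
      have h0 : (0:ℝ) ≤ ν K := by positivity
      linarith
    linarith [this]
  have h4 : ω K * (ν K : ℝ) + ω K ≤ ω K * μ K := by
    have : (ν K : ℝ) + 1 ≤ μ K := by exact_mod_cast hdiff
    nlinarith [hnn K]
  have h5 : ω K * (μ K : ℝ) ≤ ∑ i, ω i * (μ i : ℝ) :=
    Finset.single_le_sum (f := fun i => ω i * (μ i : ℝ)) (fun i _ => mul_nonneg (hnn i) (Nat.cast_nonneg _)) (Finset.mem_univ K)
  calc ∑ i, ω i * (ν i : ℝ)
      = ∑ i ∈ Finset.univ.erase K, ω i * (ν i : ℝ) + ω K * ν K := h2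
    _ ≤ ω K' * ((t : ℝ) - ν K) + ω K * ν K := by linarith
    _ ≤ (c : ℝ) * ω K' + ω K * ν K := by linarith
    _ < ω K + ω K * ν K := by linarith [hcw]
    _ ≤ ω K * μ K := by linarith
    _ ≤ ∑ i, ω i * (μ i : ℝ) := h5
end

section
/- Let I ⊂ K[x_1,...,x_n] be a graded ideal, ω, ω′ ∈ R^n, ≻ a term order, and G the reduced Gröbner basis of I with respect to the refinement ≻_ω. If in_ω(f) = in_{ω′}(f) for every f ∈ G, then in_ω(I) = in_{ω′}(I). -/
/-- The `ω`-weight of an exponent vector. -/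
noncomputable def wtF {n : ℕ} (ω : Fin n → ℝ) (ν : Fin n →₀ ℕ) : ℝ :=
  ∑ i, ω i * (ν i : ℝ)

open scoped Classical in
/-- The initial form `in_ω(f)`: the sum of the terms of `f` of minimal `ω`-weight. -/
noncomputable def initialForm {n : ℕ} {K : Type*} [CommRing K] (ω : Fin n → ℝ)
    (f : MvPolynomial (Fin n) K) : MvPolynomial (Fin n) K :=
  ∑ ν ∈ f.support.filter (fun ν => ∀ μ ∈ f.support, wtF ω ν ≤ wtF ω μ),
    MvPolynomial.monomial ν (f.coeff ν)

/-- The initial ideal `in_ω(I) = (in_ω(f) : f ∈ I)`. -/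
noncomputable def initialIdealW {n : ℕ} {K : Type*} [CommRing K] (ω : Fin n → ℝ)
    (I : Ideal (MvPolynomial (Fin n) K)) : Ideal (MvPolynomial (Fin n) K) :=
  Ideal.span {p | ∃ f ∈ I, p = initialForm ω f}

/-- `ν` is the leading exponent of `f` with respect to the strict order `r`
("`r ν μ`" meaning "`x^ν ≻ x^μ`"). -/
def LeadSpec {n : ℕ} {K : Type*} [CommRing K]
    (r : (Fin n →₀ ℕ) → (Fin n →₀ ℕ) → Prop)
    (f : MvPolynomial (Fin n) K) (ν : Fin n →₀ ℕ) : Prop :=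
  ν ∈ f.support ∧ ∀ μ ∈ f.support, μ ≠ ν → r ν μ

/-- The initial ideal of `I` with respect to a term order `r`: generated by the leading
terms of the elements of `I`. -/
noncomputable def initialIdealR {n : ℕ} {K : Type*} [CommRing K]
    (r : (Fin n →₀ ℕ) → (Fin n →₀ ℕ) → Prop)
    (I : Ideal (MvPolynomial (Fin n) K)) : Ideal (MvPolynomial (Fin n) K) :=
  Ideal.span {p | ∃ f ∈ I, ∃ ν, LeadSpec r f ν ∧ p = MvPolynomial.monomial ν (f.coeff ν)}

/-- `G` is a Gröbner basis of `I` with respect to the term order `r`. -/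
def IsGroebnerBasis {n : ℕ} {K : Type*} [CommRing K]
    (r : (Fin n →₀ ℕ) → (Fin n →₀ ℕ) → Prop)
    (I : Ideal (MvPolynomial (Fin n) K)) (G : Finset (MvPolynomial (Fin n) K)) : Prop :=
  (↑G ⊆ (I : Set (MvPolynomial (Fin n) K))) ∧
  Ideal.span {p | ∃ g ∈ G, ∃ ν, LeadSpec r g ν ∧ p = MvPolynomial.monomial ν (g.coeff ν)}
    = initialIdealR r I

/-- `G` is the reduced Gröbner basis of `I` with respect to `r`: a Gröbner basis whose
elements are monic and such that no monomial of an element is divisible by the leading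
monomial of another element. -/
def IsReducedGroebnerBasis {n : ℕ} {K : Type*} [CommRing K]
    (r : (Fin n →₀ ℕ) → (Fin n →₀ ℕ) → Prop)
    (I : Ideal (MvPolynomial (Fin n) K)) (G : Finset (MvPolynomial (Fin n) K)) : Prop :=
  IsGroebnerBasis r I G ∧
  (∀ g ∈ G, ∀ ν, LeadSpec r g ν → g.coeff ν = 1) ∧
  (∀ g ∈ G, ∀ g' ∈ G, g ≠ g' → ∀ ν ∈ g.support, ∀ ν', LeadSpec r g' ν' → ¬ ν' ≤ ν)

/-- `r` is a term order (written with the "larger/leading" element first). -/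
structure IsTermOrder (n : ℕ) (r : (Fin n →₀ ℕ) → (Fin n →₀ ℕ) → Prop) : Prop where
  trans : ∀ a b c, r a b → r b c → r a c
  irrefl : ∀ a, ¬ r a a
  total : ∀ a b, a ≠ b → r a b ∨ r b a
  add_right : ∀ a b c, r a b → r (a + c) (b + c)
  gt_zero : ∀ a, a ≠ 0 → r a 0

/-- The refinement `≻_ω` of a term order `≻` by `ω`: compare first by `ω`-weight
(minimal weight is leading), break ties with `≻`. -/
def refineRel {n : ℕ} (ω : Fin n → ℝ) (r : (Fin n →₀ ℕ) → (Fin n →₀ ℕ) → Prop) :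
    (Fin n →₀ ℕ) → (Fin n →₀ ℕ) → Prop :=
  fun ν μ => wtF ω ν < wtF ω μ ∨ (wtF ω ν = wtF ω μ ∧ r ν μ)

namespace Stmt12Aux

open MvPolynomial

theorem wtF_add {n : ℕ} (ω : Fin n → ℝ) (a b : Fin n →₀ ℕ) :
    wtF ω (a + b) = wtF ω a + wtF ω b := by
  simp only [wtF, Finsupp.add_apply, Nat.cast_add, mul_add, Finset.sum_add_distrib]

section Order

variable {n : ℕ} {ω : Fin n → ℝ} {r : (Fin n →₀ ℕ) → (Fin n →₀ ℕ) → Prop}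

theorem refine_trans (hr : IsTermOrder n r) {a b c} :
    refineRel ω r a b → refineRel ω r b c → refineRel ω r a c := by
  rintro (h1 | ⟨e1, h1⟩) (h2 | ⟨e2, h2⟩)
  · exact Or.inl (h1.trans h2)
  · exact Or.inl (e2 ▸ h1)
  · exact Or.inl (e1 ▸ h2)
  · exact Or.inr ⟨e1.trans e2, hr.trans _ _ _ h1 h2⟩

theorem refine_irrefl (hr : IsTermOrder n r) (a) : ¬ refineRel ω r a a := by
  rintro (h | ⟨e, h⟩)
  · exact lt_irrefl _ h
  · exact hr.irrefl a h

theorem refine_total (hr : IsTermOrder n r) (a b) (hab : a ≠ b) :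
    refineRel ω r a b ∨ refineRel ω r b a := by
  rcases lt_trichotomy (wtF ω a) (wtF ω b) with h | h | h
  · exact Or.inl (Or.inl h)
  · rcases hr.total a b hab with h' | h'
    · exact Or.inl (Or.inr ⟨h, h'⟩)
    · exact Or.inr (Or.inr ⟨h.symm, h'⟩)
  · exact Or.inr (Or.inl h)

theorem refine_asymm (hr : IsTermOrder n r) {a b} (h : refineRel ω r a b) :
    ¬ refineRel ω r b a := fun h' => refine_irrefl hr a (refine_trans hr h h')

theorem refine_add_right (hr : IsTermOrder n r) {a b} (c) (h : refineRel ω r a b) :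
    refineRel ω r (a + c) (b + c) := by
  rcases h with h | ⟨e, h⟩
  · exact Or.inl (by rw [wtF_add, wtF_add]; linarith)
  · exact Or.inr ⟨by rw [wtF_add, wtF_add, e], hr.add_right _ _ _ h⟩

theorem exists_rel_max {α : Type*} {rel : α → α → Prop}
    (htot : ∀ a b, a ≠ b → rel a b ∨ rel b a) (htr : ∀ a b c, rel a b → rel b c → rel a c)
    (s : Finset α) (hs : s.Nonempty) : ∃ ν ∈ s, ∀ μ ∈ s, μ ≠ ν → rel ν μ := by
  classical
  induction s using Finset.induction_on with
  | empty => simp at hs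
  | @insert a s ha ih =>
    rcases s.eq_empty_or_nonempty with rfl | hsne
    · exact ⟨a, by simp, by simp⟩
    · obtain ⟨ν, hν, hmax⟩ := ih hsne
      by_cases haν : a = ν
      · refine ⟨a, Finset.mem_insert_self _ _, ?_⟩
        intro μ hμ hne
        rcases Finset.mem_insert.1 hμ with rfl | hμs
        · exact absurd rfl hne
        · rw [haν]; exact hmax μ hμs (fun e => hne (e.trans haν.symm))
      · rcases htot a ν haν with h | h
        · refine ⟨a, Finset.mem_insert_self _ _, ?_⟩
          intro μ hμ hne
          rcases Finset.mem_insert.1 hμ with rfl | hμs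
          · exact absurd rfl hne
          · by_cases hμν : μ = ν
            · subst hμν; exact h
            · exact htr _ _ _ h (hmax μ hμs hμν)
        · refine ⟨ν, Finset.mem_insert_of_mem hν, ?_⟩
          intro μ hμ hne
          rcases Finset.mem_insert.1 hμ with rfl | hμs
          · exact h
          · exact hmax μ hμs hne

variable {K : Type*} [Field K]

theorem leadSpec_unique {rel : (Fin n →₀ ℕ) → (Fin n →₀ ℕ) → Prop}
    (hasymm : ∀ {a b}, rel a b → ¬ rel b a)
    {f : MvPolynomial (Fin n) K} {ν ν'} (h : LeadSpec rel f ν) (h' : LeadSpec rel f ν') :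
    ν = ν' := by
  by_contra hne
  exact hasymm (h.2 ν' h'.1 (Ne.symm hne)) (h'.2 ν h.1 hne)

theorem exists_leadSpec {rel : (Fin n →₀ ℕ) → (Fin n →₀ ℕ) → Prop}
    (htot : ∀ a b, a ≠ b → rel a b ∨ rel b a) (htr : ∀ a b c, rel a b → rel b c → rel a c)
    {f : MvPolynomial (Fin n) K} (hf : f ≠ 0) : ∃ ν, LeadSpec rel f ν := by
  obtain ⟨ν, hν, hmax⟩ := exists_rel_max htot htr f.support
    (by rwa [Finset.nonempty_iff_ne_empty, Ne, MvPolynomial.support_eq_empty])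
  exact ⟨ν, hν, hmax⟩

theorem leadSpec_min_wt (hr : IsTermOrder n r) {f : MvPolynomial (Fin n) K} {ν}
    (h : LeadSpec (refineRel ω r) f ν) : ∀ μ ∈ f.support, wtF ω ν ≤ wtF ω μ := by
  intro μ hμ
  by_cases hμν : μ = ν
  · exact le_of_eq (by rw [hμν])
  · rcases h.2 μ hμ hμν with h' | ⟨e, _⟩
    · exact h'.le
    · exact e.le

end Order

section Part

variable {n : ℕ} {K : Type*} [Field K]

open Classical in
/-- The part of `f` of `ω`-weight exactly `w`. -/
noncomputable def part (ω : Fin n → ℝ) (w : ℝ) (f : MvPolynomial (Fin n) K) :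
    MvPolynomial (Fin n) K :=
  ∑ ν ∈ f.support.filter (fun ν => wtF ω ν = w), MvPolynomial.monomial ν (f.coeff ν)

theorem coeff_part (ω : Fin n → ℝ) (w : ℝ) (f : MvPolynomial (Fin n) K) (μ : Fin n →₀ ℕ) :
    (part ω w f).coeff μ = if wtF ω μ = w then f.coeff μ else 0 := by
  classical
  unfold part
  rw [MvPolynomial.coeff_sum]
  rw [Finset.sum_congr rfl (fun ν _ => MvPolynomial.coeff_monomial μ ν (f.coeff ν)),
    Finset.sum_ite_eq' _ μ (fun ν => f.coeff ν)]
  by_cases hmem : μ ∈ f.support.filter (fun ν => wtF ω ν = w)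
  · rw [if_pos hmem, if_pos (Finset.mem_filter.1 hmem).2]
  · rw [if_neg hmem]
    by_cases hw : wtF ω μ = w
    · rw [if_pos hw]
      by_contra hc
      exact hmem (Finset.mem_filter.2 ⟨MvPolynomial.mem_support_iff.2
        (fun h0 => hc h0.symm), hw⟩)
    · rw [if_neg hw]

theorem coeff_initialForm (ω : Fin n → ℝ) (f : MvPolynomial (Fin n) K) (μ : Fin n →₀ ℕ) :
    (initialForm ω f).coeff μ =
      if μ ∈ f.support ∧ ∀ τ ∈ f.support, wtF ω μ ≤ wtF ω τ then f.coeff μ else 0 := by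
  classical
  unfold initialForm
  rw [MvPolynomial.coeff_sum]
  rw [Finset.sum_congr rfl (fun ν _ => MvPolynomial.coeff_monomial μ ν (f.coeff ν)),
    Finset.sum_ite_eq' _ μ (fun ν => f.coeff ν)]
  by_cases hmem : μ ∈ f.support.filter (fun ν => ∀ μ' ∈ f.support, wtF ω ν ≤ wtF ω μ')
  · rw [if_pos hmem,
      if_pos ⟨(Finset.mem_filter.1 hmem).1, (Finset.mem_filter.1 hmem).2⟩]
  · rw [if_neg hmem, if_neg (fun hc => hmem (Finset.mem_filter.2 ⟨hc.1, hc.2⟩))]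

theorem initialForm_zero (ω : Fin n → ℝ) : initialForm (K := K) ω 0 = 0 := by
  apply MvPolynomial.ext
  intro μ
  rw [coeff_initialForm]
  simp

theorem mem_support_part_iff {ω : Fin n → ℝ} {w : ℝ} {f : MvPolynomial (Fin n) K}
    {μ : Fin n →₀ ℕ} : μ ∈ (part ω w f).support ↔ μ ∈ f.support ∧ wtF ω μ = w := by
  rw [MvPolynomial.mem_support_iff, coeff_part]
  by_cases hw : wtF ω μ = w
  · simp [hw, MvPolynomial.mem_support_iff]
  · simp [hw]

theorem part_add (ω : Fin n → ℝ) (w : ℝ) (f g : MvPolynomial (Fin n) K) :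
    part ω w (f + g) = part ω w f + part ω w g := by
  apply MvPolynomial.ext
  intro μ
  rw [MvPolynomial.coeff_add, coeff_part, coeff_part, coeff_part, MvPolynomial.coeff_add]
  by_cases hw : wtF ω μ = w <;> simp [hw]

theorem part_smul (ω : Fin n → ℝ) (w : ℝ) (c : K) (f : MvPolynomial (Fin n) K) :
    part ω w (c • f) = c • part ω w f := by
  apply MvPolynomial.ext
  intro μ
  rw [MvPolynomial.coeff_smul, coeff_part, coeff_part, MvPolynomial.coeff_smul]
  by_cases hw : wtF ω μ = w <;> simp [hw]

theorem part_zero (ω : Fin n → ℝ) (w : ℝ) : part (K := K) ω w 0 = 0 := by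
  apply MvPolynomial.ext
  intro μ
  rw [coeff_part]
  simp

theorem part_part (ω : Fin n → ℝ) (w w' : ℝ) (f : MvPolynomial (Fin n) K) :
    part ω w (part ω w' f) = if w = w' then part ω w f else 0 := by
  apply MvPolynomial.ext
  intro μ
  rw [coeff_part, coeff_part]
  by_cases hww : w = w'
  · subst hww
    rw [if_pos rfl, coeff_part]
    by_cases hw : wtF ω μ = w <;> simp [hw]
  · rw [if_neg hww, MvPolynomial.coeff_zero]
    by_cases hw : wtF ω μ = w
    · rw [if_pos hw, if_neg (by rw [hw]; exact hww)]
    · rw [if_neg hw]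

theorem part_eq_zero_of_no_weight {ω : Fin n → ℝ} {w : ℝ} {f : MvPolynomial (Fin n) K}
    (h : ∀ μ ∈ f.support, wtF ω μ ≠ w) : part ω w f = 0 := by
  apply MvPolynomial.ext
  intro μ
  rw [coeff_part, MvPolynomial.coeff_zero]
  by_cases hs : μ ∈ f.support
  · rw [if_neg (h μ hs)]
  · by_cases hw : wtF ω μ = w
    · rw [if_pos hw]; exact MvPolynomial.notMem_support_iff.1 hs
    · rw [if_neg hw]

theorem part_monomial_mul (ω : Fin n → ℝ) (w : ℝ) (δ : Fin n →₀ ℕ) (c : K)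
    (f : MvPolynomial (Fin n) K) :
    part ω w (MvPolynomial.monomial δ c * f)
      = MvPolynomial.monomial δ c * part ω (w - wtF ω δ) f := by
  apply MvPolynomial.ext
  intro μ
  rw [coeff_part, MvPolynomial.coeff_monomial_mul', MvPolynomial.coeff_monomial_mul']
  by_cases hle : δ ≤ μ
  · rw [if_pos hle, if_pos hle, coeff_part]
    have hsum : wtF ω μ = wtF ω δ + wtF ω (μ - δ) := by
      rw [← wtF_add]
      congr 1
      exact (add_tsub_cancel_of_le hle).symm
    by_cases hw : wtF ω μ = w
    · rw [if_pos hw, if_pos (by rw [← hw, hsum]; ring)]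
    · rw [if_neg hw, if_neg (fun hc => hw (by rw [hsum, hc]; ring)), mul_zero]
  · rw [if_neg hle, if_neg hle]
    by_cases hw : wtF ω μ = w
    · rw [if_pos hw]
    · rw [if_neg hw]

/-- `initialForm` equals `part` at the minimal weight. -/
theorem initialForm_eq_part {ω : Fin n → ℝ} {w : ℝ} {f : MvPolynomial (Fin n) K}
    {x : Fin n →₀ ℕ} (hx : x ∈ f.support) (hxw : wtF ω x = w)
    (hmin : ∀ μ ∈ f.support, w ≤ wtF ω μ) : initialForm ω f = part ω w f := by
  apply MvPolynomial.ext
  intro μ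
  rw [coeff_initialForm, coeff_part]
  by_cases hs : μ ∈ f.support
  · by_cases hw : wtF ω μ = w
    · rw [if_pos hw, if_pos ⟨hs, fun τ hτ => hw ▸ hmin τ hτ⟩]
    · rw [if_neg hw, if_neg ?_]
      rintro ⟨-, hall⟩
      exact hw (le_antisymm (hxw ▸ hall x hx) (hmin μ hs))
  · have h0 : f.coeff μ = 0 := MvPolynomial.notMem_support_iff.1 hs
    by_cases hw : wtF ω μ = w
    · rw [if_pos hw, if_neg (fun hc => hs hc.1), h0]
    · rw [if_neg hw, if_neg (fun hc => hs hc.1)]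

theorem initialForm_ne_zero {ω : Fin n → ℝ} {f : MvPolynomial (Fin n) K} (hf : f ≠ 0) :
    initialForm ω f ≠ 0 := by
  classical
  have hne : f.support.Nonempty := by
    rwa [Finset.nonempty_iff_ne_empty, Ne, MvPolynomial.support_eq_empty]
  obtain ⟨x, hx, hmin⟩ := Finset.exists_min_image f.support (wtF ω) hne
  intro hc
  have := coeff_initialForm ω f x
  rw [hc, MvPolynomial.coeff_zero, if_pos ⟨hx, hmin⟩] at this
  exact (MvPolynomial.mem_support_iff.1 hx) this.symm

end Part

section InitialForm

variable {n : ℕ} {K : Type*} [Field K] {ω : Fin n → ℝ}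
  {r : (Fin n →₀ ℕ) → (Fin n →₀ ℕ) → Prop}

theorem support_initialForm_subset (ω : Fin n → ℝ) (f : MvPolynomial (Fin n) K) :
    (initialForm ω f).support ⊆ f.support := by
  intro μ hμ
  rw [MvPolynomial.mem_support_iff, coeff_initialForm] at hμ
  by_cases hc : μ ∈ f.support ∧ ∀ τ ∈ f.support, wtF ω μ ≤ wtF ω τ
  · exact hc.1
  · rw [if_neg hc] at hμ; exact absurd rfl hμ

theorem mem_support_initialForm_iff {f : MvPolynomial (Fin n) K} {μ : Fin n →₀ ℕ} :
    μ ∈ (initialForm ω f).support ↔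
      μ ∈ f.support ∧ ∀ τ ∈ f.support, wtF ω μ ≤ wtF ω τ := by
  rw [MvPolynomial.mem_support_iff, coeff_initialForm]
  constructor
  · intro hμ
    by_cases hc : μ ∈ f.support ∧ ∀ τ ∈ f.support, wtF ω μ ≤ wtF ω τ
    · exact hc
    · rw [if_neg hc] at hμ; exact absurd rfl hμ
  · intro hc
    rw [if_pos hc]
    exact MvPolynomial.mem_support_iff.1 hc.1

theorem leadSpec_initialForm (hr : IsTermOrder n r) {f : MvPolynomial (Fin n) K}
    {ν : Fin n →₀ ℕ} (h : LeadSpec (refineRel ω r) f ν) :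
    LeadSpec (refineRel ω r) (initialForm ω f) ν := by
  refine ⟨mem_support_initialForm_iff.2 ⟨h.1, leadSpec_min_wt hr h⟩, ?_⟩
  intro μ hμ hne
  exact h.2 μ (support_initialForm_subset ω f hμ) hne

theorem initialForm_eq_part_lead (hr : IsTermOrder n r) {f : MvPolynomial (Fin n) K}
    {ν : Fin n →₀ ℕ} (h : LeadSpec (refineRel ω r) f ν) :
    initialForm ω f = part ω (wtF ω ν) f :=
  initialForm_eq_part h.1 rfl (leadSpec_min_wt hr h)

theorem mem_support_monomial_mul {δ μ : Fin n →₀ ℕ} {c : K} (hc : c ≠ 0)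
    {f : MvPolynomial (Fin n) K} :
    μ ∈ (MvPolynomial.monomial δ c * f).support ↔ δ ≤ μ ∧ μ - δ ∈ f.support := by
  rw [MvPolynomial.mem_support_iff, MvPolynomial.coeff_monomial_mul']
  by_cases hle : δ ≤ μ
  · rw [if_pos hle]
    simp [hle, hc, MvPolynomial.mem_support_iff]
  · rw [if_neg hle]
    simp [hle]

theorem initialForm_monomial_mul (ω : Fin n → ℝ) {c : K} (hc : c ≠ 0) (δ : Fin n →₀ ℕ)
    (f : MvPolynomial (Fin n) K) :
    initialForm ω (MvPolynomial.monomial δ c * f)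
      = MvPolynomial.monomial δ c * initialForm ω f := by
  rcases eq_or_ne f 0 with rfl | hf
  · rw [mul_zero, initialForm_zero, mul_zero]
  have hne : f.support.Nonempty := by
    rwa [Finset.nonempty_iff_ne_empty, Ne, MvPolynomial.support_eq_empty]
  obtain ⟨x, hx, hmin⟩ := Finset.exists_min_image f.support (wtF ω) hne
  have h1 : initialForm ω (MvPolynomial.monomial δ c * f)
      = part ω (wtF ω δ + wtF ω x) (MvPolynomial.monomial δ c * f) := by
    refine initialForm_eq_part (x := δ + x) ?_ ?_ ?_
    · rw [mem_support_monomial_mul hc]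
      exact ⟨le_add_right le_rfl, by rwa [add_tsub_cancel_left]⟩
    · rw [wtF_add]
    · intro μ hμ
      rw [mem_support_monomial_mul hc] at hμ
      have : wtF ω μ = wtF ω δ + wtF ω (μ - δ) := by
        rw [← wtF_add]
        congr 1
        exact (add_tsub_cancel_of_le hμ.1).symm
      rw [this]
      exact add_le_add (le_refl _) (hmin _ hμ.2)
  rw [h1, part_monomial_mul]
  congr 1
  rw [show wtF ω δ + wtF ω x - wtF ω δ = wtF ω x by ring]
  exact (initialForm_eq_part hx rfl hmin).symm

theorem part_homogeneousComponent (ω : Fin n → ℝ) (w : ℝ) (d : ℕ)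
    (f : MvPolynomial (Fin n) K) :
    part ω w (MvPolynomial.homogeneousComponent d f)
      = MvPolynomial.homogeneousComponent d (part ω w f) := by
  apply MvPolynomial.ext
  intro μ
  rw [coeff_part, MvPolynomial.coeff_homogeneousComponent,
    MvPolynomial.coeff_homogeneousComponent, coeff_part]
  by_cases hw : wtF ω μ = w <;> by_cases hd : μ.degree = d <;> simp [hw, hd]

theorem support_homogeneousComponent_subset (d : ℕ) (f : MvPolynomial (Fin n) K) :
    (MvPolynomial.homogeneousComponent d f).support ⊆ f.support := by
  intro μ hμ
  rw [MvPolynomial.mem_support_iff, MvPolynomial.coeff_homogeneousComponent] at hμ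
  rw [MvPolynomial.mem_support_iff]
  by_cases hd : μ.degree = d
  · rwa [if_pos hd] at hμ
  · rw [if_neg hd] at hμ; exact absurd rfl hμ

theorem degree_add (a b : Fin n →₀ ℕ) : (a + b).degree = a.degree + b.degree := by
  simp [Finsupp.degree_eq_weight_one, map_add]

theorem isHomogeneous_support_degree {f : MvPolynomial (Fin n) K} {d : ℕ}
    (hf : f.IsHomogeneous d) {μ : Fin n →₀ ℕ} (hμ : μ ∈ f.support) : μ.degree = d := by
  rw [Finsupp.degree_eq_weight_one]
  exact hf (MvPolynomial.mem_support_iff.1 hμ)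

end InitialForm

section Dimension

variable {n : ℕ} {K : Type*} [Field K]

/-- The set of leading exponents of the elements of `V`. -/
def leadsSet (rel : (Fin n →₀ ℕ) → (Fin n →₀ ℕ) → Prop)
    (V : Set (MvPolynomial (Fin n) K)) : Set (Fin n →₀ ℕ) :=
  {ν | ∃ f ∈ V, LeadSpec rel f ν}

theorem le_span_monomials {S : Set (Fin n →₀ ℕ)} {V : Submodule K (MvPolynomial (Fin n) K)}
    (hs : ∀ f ∈ V, ↑f.support ⊆ S) :
    V ≤ Submodule.span K ((fun ν => MvPolynomial.monomial ν (1 : K)) '' S) := by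
  intro f hf
  rw [MvPolynomial.as_sum f]
  apply Submodule.sum_mem
  intro ν hν
  have he : MvPolynomial.monomial ν (f.coeff ν)
      = (f.coeff ν) • MvPolynomial.monomial ν (1 : K) := by
    rw [MvPolynomial.smul_monomial, smul_eq_mul, mul_one]
  rw [he]
  exact Submodule.smul_mem _ _ (Submodule.subset_span ⟨ν, hs f hf hν, rfl⟩)

theorem finiteDimensional_of_supports {S : Set (Fin n →₀ ℕ)} (hS : S.Finite)
    {V : Submodule K (MvPolynomial (Fin n) K)} (hs : ∀ f ∈ V, ↑f.support ⊆ S) :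
    FiniteDimensional K V := by
  haveI := FiniteDimensional.span_of_finite K
    (hS.image (fun ν => MvPolynomial.monomial ν (1 : K)))
  exact Submodule.finiteDimensional_of_le (le_span_monomials hs)

theorem leadsSet_finite {rel : (Fin n →₀ ℕ) → (Fin n →₀ ℕ) → Prop}
    {S : Set (Fin n →₀ ℕ)} (hS : S.Finite) {V : Set (MvPolynomial (Fin n) K)}
    (hs : ∀ f ∈ V, ↑f.support ⊆ S) : (leadsSet rel V).Finite := by
  refine hS.subset ?_
  rintro ν ⟨f, hf, hlead⟩
  exact hs f hf hlead.1

theorem ncard_leads_le_finrank {rel : (Fin n →₀ ℕ) → (Fin n →₀ ℕ) → Prop}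
    (htot : ∀ a b, a ≠ b → rel a b ∨ rel b a)
    (htr : ∀ a b c, rel a b → rel b c → rel a c)
    (hasymm : ∀ {a b}, rel a b → ¬ rel b a)
    {S : Set (Fin n →₀ ℕ)} (hS : S.Finite) {V : Submodule K (MvPolynomial (Fin n) K)}
    (hs : ∀ f ∈ V, ↑f.support ⊆ S) :
    (leadsSet rel (V : Set (MvPolynomial (Fin n) K))).ncard ≤ Module.finrank K V := by
  classical
  haveI := finiteDimensional_of_supports hS hs
  have hfin : (leadsSet rel (V : Set (MvPolynomial (Fin n) K))).Finite := leadsSet_finite hS hs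
  set L : Finset (Fin n →₀ ℕ) := hfin.toFinset with hLdef
  have hmem : ∀ ν : L, (ν : Fin n →₀ ℕ) ∈ leadsSet rel (V : Set (MvPolynomial (Fin n) K)) := by
    intro ν
    have := ν.2
    rwa [Set.Finite.mem_toFinset] at this
  choose f hfV hflead using fun ν : L => hmem ν
  have hli0 : LinearIndependent K (V.subtype ∘ (fun ν : L => (⟨f ν, hfV ν⟩ : V))) := by
    rw [Fintype.linearIndependent_iff]
    intro g hg
    by_contra hcon
    push_neg at hcon
    obtain ⟨i0, hi0⟩ := hcon
    set Lg : Finset (Fin n →₀ ℕ) :=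
      (Finset.univ.filter (fun ν : L => g ν ≠ 0)).image (fun ν : L => (ν : Fin n →₀ ℕ))
      with hLgdef
    have hne : Lg.Nonempty :=
      ⟨(i0 : Fin n →₀ ℕ), Finset.mem_image_of_mem _
        (Finset.mem_filter.2 ⟨Finset.mem_univ _, hi0⟩)⟩
    obtain ⟨νm, hνm, hmax⟩ := exists_rel_max htot htr Lg hne
    rw [hLgdef, Finset.mem_image] at hνm
    obtain ⟨ν₀, hν₀f, hν₀e⟩ := hνm
    have hgν₀ : g ν₀ ≠ 0 := (Finset.mem_filter.1 hν₀f).2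
    -- evaluate the coefficient of the sum at νm
    have hcoeff : MvPolynomial.coeff νm (∑ ν : L, g ν • f ν) = g ν₀ * (f ν₀).coeff νm := by
      rw [MvPolynomial.coeff_sum]
      rw [Finset.sum_eq_single ν₀]
      · rw [MvPolynomial.coeff_smul, smul_eq_mul]
      · intro ν _ hνne
        rcases eq_or_ne (g ν) 0 with h0 | h0
        · rw [MvPolynomial.coeff_smul, h0, zero_smul]
        · rw [MvPolynomial.coeff_smul, smul_eq_mul]
          have hνin : (ν : Fin n →₀ ℕ) ∈ Lg :=
            Finset.mem_image_of_mem _ (Finset.mem_filter.2 ⟨Finset.mem_univ _, h0⟩)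
          have hcne : (ν : Fin n →₀ ℕ) ≠ νm := by
            intro hc
            exact hνne (Subtype.ext (hc.trans hν₀e.symm))
          have h1 : rel νm (ν : Fin n →₀ ℕ) := hmax _ hνin hcne
          have h2 : (f ν).coeff νm = 0 := by
            by_contra hc
            have hsupp : νm ∈ (f ν).support := MvPolynomial.mem_support_iff.2 hc
            have h3 : rel (ν : Fin n →₀ ℕ) νm := (hflead ν).2 νm hsupp (fun hc2 => hcne hc2.symm)
            exact hasymm h1 h3
          rw [h2, mul_zero]
      · intro hnot
        exact absurd (Finset.mem_univ ν₀) hnot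
    have hc0 : MvPolynomial.coeff νm (∑ ν : L, g ν • f ν) = 0 := by
      have : (∑ ν : L, g ν • f ν) = 0 := by
        simpa using hg
      rw [this, MvPolynomial.coeff_zero]
    have hlead0 : (f ν₀).coeff νm ≠ 0 := by
      have := (hflead ν₀).1
      rw [hν₀e] at this
      exact MvPolynomial.mem_support_iff.1 this
    rw [hcoeff] at hc0
    exact hgν₀ ((mul_eq_zero.1 hc0).resolve_right hlead0)
  have hli : LinearIndependent K (fun ν : L => (⟨f ν, hfV ν⟩ : V)) :=
    LinearIndependent.of_comp V.subtype hli0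
  have hcard := LinearIndependent.fintype_card_le_finrank hli
  rwa [Fintype.card_coe, ← Set.ncard_eq_toFinset_card _ hfin] at hcard

theorem finrank_le_ncard_leads {rel : (Fin n →₀ ℕ) → (Fin n →₀ ℕ) → Prop}
    (htot : ∀ a b, a ≠ b → rel a b ∨ rel b a)
    (htr : ∀ a b c, rel a b → rel b c → rel a c)
    (hasymm : ∀ {a b}, rel a b → ¬ rel b a)
    {S : Set (Fin n →₀ ℕ)} (hS : S.Finite) {V : Submodule K (MvPolynomial (Fin n) K)}
    (hs : ∀ f ∈ V, ↑f.support ⊆ S) :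
    Module.finrank K V ≤ (leadsSet rel (V : Set (MvPolynomial (Fin n) K))).ncard := by
  classical
  have hfin : (leadsSet rel (V : Set (MvPolynomial (Fin n) K))).Finite := leadsSet_finite hS hs
  -- pick representatives
  set pick : (Fin n →₀ ℕ) → MvPolynomial (Fin n) K := fun ν =>
    if h : ν ∈ leadsSet rel (V : Set (MvPolynomial (Fin n) K)) then h.choose else 0
    with hpickdef
  have hpickV : ∀ ν ∈ leadsSet rel (V : Set (MvPolynomial (Fin n) K)), pick ν ∈ V := by
    intro ν h
    rw [hpickdef]
    simp only [dif_pos h]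
    exact h.choose_spec.1
  have hpicklead : ∀ ν ∈ leadsSet rel (V : Set (MvPolynomial (Fin n) K)),
      LeadSpec rel (pick ν) ν := by
    intro ν h
    rw [hpickdef]
    simp only [dif_pos h]
    exact h.choose_spec.2
  set T : Finset (MvPolynomial (Fin n) K) := hfin.toFinset.image pick with hTdef
  -- main induction: every element of V lies in the span of T
  have main : ∀ k : ℕ, ∀ f ∈ V, ∀ ν, LeadSpec rel f ν →
      (hS.toFinset.filter (fun μ => μ = ν ∨ rel ν μ)).card ≤ k →
      f ∈ Submodule.span K (T : Set (MvPolynomial (Fin n) K)) := by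
    intro k
    induction k with
    | zero =>
      intro f hf ν hlead hcard
      exfalso
      have hνS : ν ∈ hS.toFinset := hS.mem_toFinset.2 (hs f hf hlead.1)
      have : ν ∈ hS.toFinset.filter (fun μ => μ = ν ∨ rel ν μ) :=
        Finset.mem_filter.2 ⟨hνS, Or.inl rfl⟩
      have := Finset.card_pos.2 ⟨ν, this⟩
      omega
    | succ k ih =>
      intro f hf ν hlead hcard
      have hνleads : ν ∈ leadsSet rel (V : Set (MvPolynomial (Fin n) K)) := ⟨f, hf, hlead⟩
      have hgV : pick ν ∈ V := hpickV ν hνleads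
      have hglead : LeadSpec rel (pick ν) ν := hpicklead ν hνleads
      have hgcoeff : (pick ν).coeff ν ≠ 0 := MvPolynomial.mem_support_iff.1 hglead.1
      have hpickT : pick ν ∈ T := by
        rw [hTdef]
        exact Finset.mem_image_of_mem pick (hfin.mem_toFinset.2 hνleads)
      set c : K := f.coeff ν / (pick ν).coeff ν with hcdef
      set f' : MvPolynomial (Fin n) K := f - c • pick ν with hf'def
      have hf'V : f' ∈ V := sub_mem hf (Submodule.smul_mem _ _ hgV)
      have hcoeffν : f'.coeff ν = 0 := by
        rw [hf'def, MvPolynomial.coeff_sub, MvPolynomial.coeff_smul, smul_eq_mul, hcdef,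
          div_mul_cancel₀ _ hgcoeff, sub_self]
      have hsupp' : ∀ μ ∈ f'.support, rel ν μ := by
        intro μ hμ
        have hμν : μ ≠ ν := by
          intro he
          rw [he] at hμ
          exact (MvPolynomial.mem_support_iff.1 hμ) hcoeffν
        have hμ2 := MvPolynomial.support_sub (Fin n) f (c • pick ν) hμ
        rcases Finset.mem_union.1 hμ2 with hcase | hcase
        · exact hlead.2 μ hcase hμν
        · exact hglead.2 μ (MvPolynomial.support_smul hcase) hμν
      have hfeq : f = f' + c • pick ν := by
        rw [hf'def, sub_add_cancel]
      rcases eq_or_ne f' 0 with h0 | hne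
      · rw [hfeq, h0, zero_add]
        exact Submodule.smul_mem _ _ (Submodule.subset_span hpickT)
      · obtain ⟨ν', hlead'⟩ := exists_leadSpec htot htr hne
        have hrel : rel ν ν' := hsupp' ν' hlead'.1
        have hsub : hS.toFinset.filter (fun μ => μ = ν' ∨ rel ν' μ)
            ⊆ hS.toFinset.filter (fun μ => μ = ν ∨ rel ν μ) := by
          intro μ hμ
          rw [Finset.mem_filter] at hμ ⊢
          refine ⟨hμ.1, Or.inr ?_⟩
          rcases hμ.2 with rfl | h
          · exact hrel
          · exact htr _ _ _ hrel h
        have hνin : ν ∈ hS.toFinset.filter (fun μ => μ = ν ∨ rel ν μ) :=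
          Finset.mem_filter.2 ⟨hS.mem_toFinset.2 (hs f hf hlead.1), Or.inl rfl⟩
        have hνnot : ν ∉ hS.toFinset.filter (fun μ => μ = ν' ∨ rel ν' μ) := by
          intro hc
          rcases (Finset.mem_filter.1 hc).2 with rfl | h
          · exact hasymm hrel hrel
          · exact hasymm hrel h
        have hlt : (hS.toFinset.filter (fun μ => μ = ν' ∨ rel ν' μ)).card
            < (hS.toFinset.filter (fun μ => μ = ν ∨ rel ν μ)).card := by
          apply Finset.card_lt_card
          rw [Finset.ssubset_def]
          exact ⟨hsub, fun hcon => hνnot (hcon hνin)⟩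
        have hf'span := ih f' hf'V ν' hlead' (by omega)
        rw [hfeq]
        exact Submodule.add_mem _ hf'span
          (Submodule.smul_mem _ _ (Submodule.subset_span hpickT))
  have hVle : V ≤ Submodule.span K (T : Set (MvPolynomial (Fin n) K)) := by
    intro f hf
    rcases eq_or_ne f 0 with rfl | hne
    · exact Submodule.zero_mem _
    · obtain ⟨ν, hlead⟩ := exists_leadSpec htot htr hne
      exact main _ f hf ν hlead le_rfl
  haveI : FiniteDimensional K (Submodule.span K (T : Set (MvPolynomial (Fin n) K))) :=
    FiniteDimensional.span_of_finite K T.finite_toSet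
  calc Module.finrank K V
      ≤ Module.finrank K (Submodule.span K (T : Set (MvPolynomial (Fin n) K))) :=
        Submodule.finrank_mono hVle
    _ ≤ T.card := finrank_span_finset_le_card T
    _ ≤ hfin.toFinset.card := Finset.card_image_le
    _ = (leadsSet rel (V : Set (MvPolynomial (Fin n) K))).ncard :=
        (Set.ncard_eq_toFinset_card _ hfin).symm

end Dimension

section LeadsOfInitialSpan

variable {n : ℕ} {K : Type*} [Field K] {ω : Fin n → ℝ}
  {r : (Fin n →₀ ℕ) → (Fin n →₀ ℕ) → Prop}

theorem leadsSet_initial_span (hr : IsTermOrder n r) (W : Submodule K (MvPolynomial (Fin n) K)) :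
    leadsSet (refineRel ω r)
        ((Submodule.span K (initialForm ω '' (W : Set (MvPolynomial (Fin n) K)))
          : Submodule K (MvPolynomial (Fin n) K)) : Set (MvPolynomial (Fin n) K))
      = leadsSet (refineRel ω r) (W : Set (MvPolynomial (Fin n) K)) := by
  set A : Submodule K (MvPolynomial (Fin n) K) :=
    Submodule.span K (initialForm ω '' (W : Set (MvPolynomial (Fin n) K))) with hAdef
  apply Set.eq_of_subset_of_subset
  · -- hard direction
    rintro ν ⟨a, haA, hlead⟩
    -- the invariant
    have hP : ∀ a ∈ A, ∀ w : ℝ, ∃ g, g ∈ W ∧ part ω w a = part ω w g ∧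
        ∀ w' : ℝ, w' < w → part ω w' g = 0 := by
      intro a haA
      refine Submodule.span_induction ?_ ?_ ?_ ?_ haA
      · rintro p ⟨f, hfW, rfl⟩ w
        rcases eq_or_ne f 0 with rfl | hf
        · exact ⟨0, Submodule.zero_mem _, by rw [initialForm_zero], fun w' _ => part_zero ω w'⟩
        have hne : f.support.Nonempty := by
          rwa [Finset.nonempty_iff_ne_empty, Ne, MvPolynomial.support_eq_empty]
        obtain ⟨x, hx, hmin⟩ := Finset.exists_min_image f.support (wtF ω) hne
        have hif : initialForm ω f = part ω (wtF ω x) f := initialForm_eq_part hx rfl hmin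
        by_cases hw : w = wtF ω x
        · refine ⟨f, hfW, ?_, ?_⟩
          · rw [hif, part_part, if_pos hw, hw]
          · intro w' hw'
            apply part_eq_zero_of_no_weight
            intro μ hμ
            have := hmin μ hμ
            rw [hw] at hw'
            intro he
            rw [he] at this
            exact absurd this (not_le.2 hw')
        · refine ⟨0, Submodule.zero_mem _, ?_, fun w' _ => part_zero ω w'⟩
          rw [hif, part_part, if_neg hw, part_zero]
      · intro w
        exact ⟨0, Submodule.zero_mem _, rfl, fun w' _ => part_zero ω w'⟩
      · rintro p q _ _ hp hq w
        obtain ⟨gp, hgpW, hgp1, hgp2⟩ := hp w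
        obtain ⟨gq, hgqW, hgq1, hgq2⟩ := hq w
        refine ⟨gp + gq, Submodule.add_mem _ hgpW hgqW, ?_, ?_⟩
        · rw [part_add, part_add, hgp1, hgq1]
        · intro w' hw'
          rw [part_add, hgp2 w' hw', hgq2 w' hw', add_zero]
      · rintro c p _ hp w
        obtain ⟨gp, hgpW, hgp1, hgp2⟩ := hp w
        refine ⟨c • gp, Submodule.smul_mem _ _ hgpW, ?_, ?_⟩
        · rw [part_smul, part_smul, hgp1]
        · intro w' hw'
          rw [part_smul, hgp2 w' hw', smul_zero]
    have ha0 : a ≠ 0 := by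
      intro h0
      have := hlead.1
      rw [h0, MvPolynomial.support_zero] at this
      exact absurd this (Finset.notMem_empty ν)
    have hmin := leadSpec_min_wt hr hlead
    have hia : initialForm ω a = part ω (wtF ω ν) a := initialForm_eq_part hlead.1 rfl hmin
    obtain ⟨g, hgW, hg1, hg2⟩ := hP a haA (wtF ω ν)
    have hgmin : ∀ μ ∈ g.support, wtF ω ν ≤ wtF ω μ := by
      intro μ hμ
      by_contra hlt
      push_neg at hlt
      have h0 := hg2 (wtF ω μ) hlt
      have hco : (part ω (wtF ω μ) g).coeff μ = g.coeff μ := by rw [coeff_part, if_pos rfl]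
      rw [h0, MvPolynomial.coeff_zero] at hco
      exact (MvPolynomial.mem_support_iff.1 hμ) hco.symm
    have hνsupp_a : ν ∈ (part ω (wtF ω ν) a).support := by
      rw [← hia]
      exact (leadSpec_initialForm hr hlead).1
    have hνsupp_g : ν ∈ g.support := by
      rw [hg1] at hνsupp_a
      exact (mem_support_part_iff.1 hνsupp_a).1
    refine ⟨g, hgW, hνsupp_g, ?_⟩
    intro μ hμ hμν
    rcases lt_or_eq_of_le (hgmin μ hμ) with hlt | heq
    · exact Or.inl hlt
    · have hμpart : μ ∈ (part ω (wtF ω ν) g).support :=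
        mem_support_part_iff.2 ⟨hμ, heq.symm⟩
      rw [← hg1] at hμpart
      have hμinit : μ ∈ (initialForm ω a).support := by rw [hia]; exact hμpart
      exact (leadSpec_initialForm hr hlead).2 μ hμinit hμν
  · rintro ν ⟨f, hfW, hlead⟩
    refine ⟨initialForm ω f, ?_, leadSpec_initialForm hr hlead⟩
    exact Submodule.subset_span ⟨f, hfW, rfl⟩

end LeadsOfInitialSpan

section Division

variable {n : ℕ} {K : Type*} [Field K]

theorem support_nonempty_of_ne_zero {f : MvPolynomial (Fin n) K} (hf : f ≠ 0) :
    f.support.Nonempty := by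
  rwa [Finset.nonempty_iff_ne_empty, Ne, MvPolynomial.support_eq_empty]

theorem finite_degree_eq (n d : ℕ) : {ν : Fin n →₀ ℕ | ν.degree = d}.Finite := by
  have hsub : {ν : Fin n →₀ ℕ | ν.degree = d}
      ⊆ Set.Iic (Finsupp.equivFunOnFinite.symm (fun _ => d)) := by
    intro ν hν
    rw [Set.mem_Iic, Finsupp.le_def]
    intro i
    have hle := Finsupp.le_degree i ν
    rw [show ν.degree = d from hν] at hle
    simpa using hle
  exact (Set.finite_Iic _).subset hsub

variable {ω ω' : Fin n → ℝ} {r : (Fin n →₀ ℕ) → (Fin n →₀ ℕ) → Prop}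

/-- The leading homogeneous component of an element `g` with `in_ω g = in_ω' g`:
its `ω`- and `ω'`-initial forms agree, and it keeps the same leading exponent. -/
theorem component_initial_eq (hr : IsTermOrder n r) {g : MvPolynomial (Fin n) K}
    {ν₀ : Fin n →₀ ℕ} (hglead : LeadSpec (refineRel ω r) g ν₀)
    (hgeq : initialForm ω g = initialForm ω' g) :
    LeadSpec (refineRel ω r) (MvPolynomial.homogeneousComponent ν₀.degree g) ν₀ ∧
      initialForm ω (MvPolynomial.homogeneousComponent ν₀.degree g)
        = initialForm ω' (MvPolynomial.homogeneousComponent ν₀.degree g) ∧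
      (MvPolynomial.homogeneousComponent ν₀.degree g).coeff ν₀ = g.coeff ν₀ := by
  classical
  set d₀ := ν₀.degree with hd₀
  set gd := MvPolynomial.homogeneousComponent d₀ g with hgddef
  have hco : gd.coeff ν₀ = g.coeff ν₀ := by
    rw [hgddef, MvPolynomial.coeff_homogeneousComponent, if_pos hd₀.symm]
  have hν₀gd : ν₀ ∈ gd.support := by
    rw [MvPolynomial.mem_support_iff, hco]
    exact MvPolynomial.mem_support_iff.1 hglead.1
  have hsub : gd.support ⊆ g.support := support_homogeneousComponent_subset d₀ g
  have hgdlead : LeadSpec (refineRel ω r) gd ν₀ :=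
    ⟨hν₀gd, fun μ hμ hμν => hglead.2 μ (hsub hμ) hμν⟩
  refine ⟨hgdlead, ?_, hco⟩
  have hg0 : g ≠ 0 := by
    intro h0
    have hmem := hglead.1
    rw [h0, MvPolynomial.support_zero] at hmem
    exact absurd hmem (Finset.notMem_empty ν₀)
  -- the ω side
  have h1 : initialForm ω g = part ω (wtF ω ν₀) g := initialForm_eq_part_lead hr hglead
  have h2 : initialForm ω gd = part ω (wtF ω ν₀) gd := initialForm_eq_part_lead hr hgdlead
  have h3 : MvPolynomial.homogeneousComponent d₀ (initialForm ω g)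
      = part ω (wtF ω ν₀) gd := by
    rw [h1, ← part_homogeneousComponent]
  -- the ω' side
  obtain ⟨x', hx', hmin'⟩ := Finset.exists_min_image g.support (wtF ω') 
    (support_nonempty_of_ne_zero hg0)
  have h4 : initialForm ω' g = part ω' (wtF ω' x') g := initialForm_eq_part hx' rfl hmin'
  have h5 : MvPolynomial.homogeneousComponent d₀ (initialForm ω' g)
      = part ω' (wtF ω' x') gd := by
    rw [h4, ← part_homogeneousComponent]
  have hkey : initialForm ω gd = part ω' (wtF ω' x') gd := by
    rw [h2, ← h3, hgeq, h5]
  have hne : initialForm ω gd ≠ 0 := initialForm_ne_zero (by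
    intro h0
    rw [h0, MvPolynomial.support_zero] at hν₀gd
    exact absurd hν₀gd (Finset.notMem_empty ν₀))
  obtain ⟨y, hy⟩ := support_nonempty_of_ne_zero (hkey ▸ hne)
  obtain ⟨hygd, hyw⟩ := mem_support_part_iff.1 hy
  have h6 : initialForm ω' gd = part ω' (wtF ω' x') gd :=
    initialForm_eq_part hygd hyw (fun μ hμ => hmin' μ (hsub hμ))
  rw [hkey, h6]

end Division

section KeyInclusion

variable {n : ℕ} {K : Type*} [Field K]
variable {ω ω' : Fin n → ℝ} {r : (Fin n →₀ ℕ) → (Fin n →₀ ℕ) → Prop}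

/-- The homogeneous degree-`d` layer of `I`, as a `K`-submodule. -/
noncomputable def Wsub (I : Ideal (MvPolynomial (Fin n) K)) (d : ℕ) :
    Submodule K (MvPolynomial (Fin n) K) :=
  (Submodule.restrictScalars K I) ⊓ (MvPolynomial.homogeneousSubmodule (Fin n) K d)

theorem mem_Wsub {I : Ideal (MvPolynomial (Fin n) K)} {d : ℕ} {f : MvPolynomial (Fin n) K} :
    f ∈ Wsub I d ↔ f ∈ I ∧ f.IsHomogeneous d := by
  rw [Wsub, Submodule.mem_inf, Submodule.restrictScalars_mem,
    MvPolynomial.mem_homogeneousSubmodule]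

theorem Wsub_supports {I : Ideal (MvPolynomial (Fin n) K)} {d : ℕ} :
    ∀ f ∈ Wsub I d, ↑f.support ⊆ {ν : Fin n →₀ ℕ | ν.degree = d} := by
  intro f hf ν hν
  exact isHomogeneous_support_degree (mem_Wsub.1 hf).2 hν

theorem initial_mem_span (I : Ideal (MvPolynomial (Fin n) K))
    (hgraded : ∀ p ∈ I, ∀ d : ℕ, MvPolynomial.homogeneousComponent d p ∈ I)
    (hr : IsTermOrder n r) (G : Finset (MvPolynomial (Fin n) K))
    (hG : IsReducedGroebnerBasis (refineRel ω r) I G)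
    (h : ∀ f ∈ G, initialForm ω f = initialForm ω' f) (d : ℕ) :
    ∀ f ∈ Wsub I d, initialForm ω f ∈
      Submodule.span K (initialForm ω' '' ((Wsub I d : Submodule K (MvPolynomial (Fin n) K)) :
        Set (MvPolynomial (Fin n) K))) := by
  classical
  have hSd : {ν : Fin n →₀ ℕ | ν.degree = d}.Finite := finite_degree_eq n d
  -- the span of the leading monomials of G as a monomial ideal
  have hspan_eq : Ideal.span {p | ∃ g ∈ G, ∃ ν, LeadSpec (refineRel ω r) g ν ∧
        p = MvPolynomial.monomial ν (g.coeff ν)}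
      = Ideal.span ((fun s => MvPolynomial.monomial s (1 : K)) ''
          {ν | ∃ g ∈ G, LeadSpec (refineRel ω r) g ν}) := by
    congr 1
    ext p
    simp only [Set.mem_image, Set.mem_setOf_eq]
    constructor
    · rintro ⟨g, hgG, ν, hlead, rfl⟩
      exact ⟨ν, ⟨g, hgG, hlead⟩, by rw [hG.2.1 g hgG ν hlead]⟩
    · rintro ⟨ν, ⟨g, hgG, hlead⟩, rfl⟩
      exact ⟨g, hgG, ν, hlead, by rw [hG.2.1 g hgG ν hlead]⟩
  have main : ∀ k : ℕ, ∀ f ∈ Wsub I d, ∀ ν, LeadSpec (refineRel ω r) f ν →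
      (hSd.toFinset.filter (fun μ => μ = ν ∨ refineRel ω r ν μ)).card ≤ k →
      initialForm ω f ∈ Submodule.span K (initialForm ω' ''
        ((Wsub I d : Submodule K (MvPolynomial (Fin n) K)) : Set (MvPolynomial (Fin n) K))) := by
    intro k
    induction k with
    | zero =>
      intro f hf ν hlead hcard
      exfalso
      have hνS : ν ∈ hSd.toFinset := hSd.mem_toFinset.2 (Wsub_supports f hf hlead.1)
      have hmem : ν ∈ hSd.toFinset.filter (fun μ => μ = ν ∨ refineRel ω r ν μ) :=
        Finset.mem_filter.2 ⟨hνS, Or.inl rfl⟩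
      have := Finset.card_pos.2 ⟨ν, hmem⟩
      omega
    | succ k ih =>
      intro f hf ν hlead hcard
      obtain ⟨hfI, hfhom⟩ := mem_Wsub.1 hf
      set c : K := f.coeff ν with hcdef
      have hcν : c ≠ 0 := MvPolynomial.mem_support_iff.1 hlead.1
      -- the leading monomial of f lies in the monomial ideal of the leads of G
      have hmono : MvPolynomial.monomial ν c ∈ Ideal.span
          ((fun s => MvPolynomial.monomial s (1 : K)) ''
            {ν' | ∃ g ∈ G, LeadSpec (refineRel ω r) g ν'}) := by
        rw [← hspan_eq, hG.1.2, initialIdealR]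
        exact Ideal.subset_span ⟨f, hfI, ν, hlead, rfl⟩
      obtain ⟨ν₀, hν₀G, hν₀le⟩ := MvPolynomial.mem_ideal_span_monomial_image.1 hmono ν (by
        rw [MvPolynomial.support_monomial, if_neg hcν]
        exact Finset.mem_singleton_self ν)
      obtain ⟨g, hgG, hglead⟩ := hν₀G
      have hgI : g ∈ I := hG.1.1 hgG
      have hgeq : initialForm ω g = initialForm ω' g := h g hgG
      obtain ⟨hgdlead, hgdeq, hgdco⟩ := component_initial_eq hr hglead hgeq
      set d₀ : ℕ := ν₀.degree with hd₀def
      set gd : MvPolynomial (Fin n) K := MvPolynomial.homogeneousComponent d₀ g with hgddef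
      have hgdI : gd ∈ I := hgraded g hgI d₀
      have hmonic : g.coeff ν₀ = 1 := hG.2.1 g hgG ν₀ hglead
      set δ : Fin n →₀ ℕ := ν - ν₀ with hδdef
      have hδν : ν₀ + δ = ν := add_tsub_cancel_of_le hν₀le
      set q : MvPolynomial (Fin n) K := MvPolynomial.monomial δ c * gd with hqdef
      have hqI : q ∈ I := Ideal.mul_mem_left I _ hgdI
      have hνdeg : ν.degree = d := isHomogeneous_support_degree hfhom hlead.1
      have hqhom : q.IsHomogeneous d := by
        have hmul := MvPolynomial.IsHomogeneous.mul
          (MvPolynomial.isHomogeneous_monomial c (rfl : δ.degree = δ.degree))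
          (MvPolynomial.homogeneousComponent_isHomogeneous d₀ g)
        have hdeg : δ.degree + d₀ = d := by
          have : ν.degree = ν₀.degree + δ.degree := by rw [← hδν, degree_add]
          omega
        rw [← hqdef] at hmul
        exact hdeg ▸ hmul
      have hqW : q ∈ Wsub I d := mem_Wsub.2 ⟨hqI, hqhom⟩
      have hcoq : q.coeff ν = c := by
        rw [hqdef, ← hδν, show ν₀ + δ = δ + ν₀ from add_comm _ _,
          MvPolynomial.coeff_monomial_mul, hgdco, hmonic, mul_one]
      set f' : MvPolynomial (Fin n) K := f - q with hf'def
      have hf'W : f' ∈ Wsub I d := sub_mem hf hqW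
      have hfeq : f = q + f' := by rw [hf'def]; ring
      have hcoeffν : f'.coeff ν = 0 := by
        rw [hf'def, MvPolynomial.coeff_sub, hcoq, ← hcdef, sub_self]
      have hsupp' : ∀ μ ∈ f'.support, refineRel ω r ν μ := by
        intro μ hμ
        have hμν : μ ≠ ν := by
          intro he
          rw [he] at hμ
          exact (MvPolynomial.mem_support_iff.1 hμ) hcoeffν
        have hμ2 := MvPolynomial.support_sub (Fin n) f q hμ
        rcases Finset.mem_union.1 hμ2 with hcase | hcase
        · exact hlead.2 μ hcase hμν
        · rw [hqdef, mem_support_monomial_mul hcν] at hcase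
          obtain ⟨hδμ, hτ⟩ := hcase
          have hτν₀ : μ - δ ≠ ν₀ := by
            intro he
            apply hμν
            rw [← add_tsub_cancel_of_le hδμ, he, add_comm, hδν]
          have hrel : refineRel ω r ν₀ (μ - δ) := hgdlead.2 _ hτ hτν₀
          have := refine_add_right hr δ hrel
          rw [hδν, show μ - δ + δ = μ from by
            rw [add_comm, add_tsub_cancel_of_le hδμ]] at this
          exact this
      -- assemble
      set w : ℝ := wtF ω ν with hwdef
      have hwν₀ : w - wtF ω δ = wtF ω ν₀ := by
        rw [hwdef, ← hδν, wtF_add]; ring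
      have hwq : part ω w q = initialForm ω' q := by
        rw [hqdef, part_monomial_mul, hwν₀,
          ← initialForm_eq_part_lead hr hgdlead, hgdeq,
          ← initialForm_monomial_mul ω' hcν δ gd]
      have hq_mem : initialForm ω' q ∈ Submodule.span K (initialForm ω' ''
          ((Wsub I d : Submodule K (MvPolynomial (Fin n) K)) : Set (MvPolynomial (Fin n) K))) :=
        Submodule.subset_span ⟨q, hqW, rfl⟩
      have hf'_mem : part ω w f' ∈ Submodule.span K (initialForm ω' ''
          ((Wsub I d : Submodule K (MvPolynomial (Fin n) K)) : Set (MvPolynomial (Fin n) K))) := by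
        rcases eq_or_ne (part ω w f') 0 with h0 | h0
        · rw [h0]; exact Submodule.zero_mem _
        · obtain ⟨y, hy⟩ := support_nonempty_of_ne_zero h0
          obtain ⟨hyf', hyw⟩ := mem_support_part_iff.1 hy
          have hminf' : ∀ μ ∈ f'.support, w ≤ wtF ω μ := by
            intro μ hμ
            rcases hsupp' μ hμ with hlt | ⟨heq, -⟩
            · exact hlt.le
            · exact le_of_eq heq
          rw [← initialForm_eq_part hyf' hyw hminf']
          have hf'0 : f' ≠ 0 := fun hz => h0 (by rw [hz, part_zero])
          obtain ⟨ν', hlead'⟩ := exists_leadSpec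
            (fun a b hab => refine_total hr a b hab)
            (fun a b c h1 h2 => refine_trans hr h1 h2) hf'0
          have hrel : refineRel ω r ν ν' := hsupp' ν' hlead'.1
          have hsub2 : hSd.toFinset.filter (fun μ => μ = ν' ∨ refineRel ω r ν' μ)
              ⊆ hSd.toFinset.filter (fun μ => μ = ν ∨ refineRel ω r ν μ) := by
            intro μ hμ
            rw [Finset.mem_filter] at hμ ⊢
            refine ⟨hμ.1, Or.inr ?_⟩
            rcases hμ.2 with rfl | hrel2
            · exact hrel
            · exact refine_trans hr hrel hrel2
          have hνin : ν ∈ hSd.toFinset.filter (fun μ => μ = ν ∨ refineRel ω r ν μ) :=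
            Finset.mem_filter.2 ⟨hSd.mem_toFinset.2 (Wsub_supports f hf hlead.1), Or.inl rfl⟩
          have hνnot : ν ∉ hSd.toFinset.filter (fun μ => μ = ν' ∨ refineRel ω r ν' μ) := by
            intro hcon
            rcases (Finset.mem_filter.1 hcon).2 with rfl | hrel2
            · exact refine_asymm hr hrel hrel
            · exact refine_asymm hr hrel hrel2
          have hlt : (hSd.toFinset.filter (fun μ => μ = ν' ∨ refineRel ω r ν' μ)).card
              < (hSd.toFinset.filter (fun μ => μ = ν ∨ refineRel ω r ν μ)).card := by
            apply Finset.card_lt_card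
            rw [Finset.ssubset_def]
            exact ⟨hsub2, fun hcon => hνnot (hcon hνin)⟩
          exact ih f' hf'W ν' hlead' (by omega)
      have hsplit : initialForm ω f = part ω w q + part ω w f' := by
        rw [initialForm_eq_part_lead hr hlead, ← hwdef, hfeq, part_add]
      rw [hsplit, hwq]
      exact Submodule.add_mem _ hq_mem hf'_mem
  intro f hf
  rcases eq_or_ne f 0 with rfl | hne
  · rw [initialForm_zero]
    exact Submodule.zero_mem _
  · obtain ⟨ν, hlead⟩ := exists_leadSpec
      (fun a b hab => refine_total hr a b hab)
      (fun a b c h1 h2 => refine_trans hr h1 h2) hne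
    exact main _ f hf ν hlead le_rfl

end KeyInclusion

section Final

variable {n : ℕ} {K : Type*} [Field K]
variable {ω ω' : Fin n → ℝ} {r : (Fin n →₀ ℕ) → (Fin n →₀ ℕ) → Prop}

theorem span_supports {S : Set (Fin n →₀ ℕ)} {T : Set (MvPolynomial (Fin n) K)}
    (hT : ∀ p ∈ T, ↑p.support ⊆ S) :
    ∀ f ∈ Submodule.span K T, ↑f.support ⊆ S := by
  classical
  intro f hf
  refine Submodule.span_induction ?_ ?_ ?_ ?_ hf
  · exact hT
  · simp
  · intro p q _ _ hp hq μ hμ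
    rcases Finset.mem_union.1 (MvPolynomial.support_add hμ) with hc | hc
    · exact hp hc
    · exact hq hc
  · intro c p _ hp μ hμ
    exact hp (MvPolynomial.support_smul hμ)

theorem Asub_eq_Bsub (I : Ideal (MvPolynomial (Fin n) K))
    (hgraded : ∀ p ∈ I, ∀ d : ℕ, MvPolynomial.homogeneousComponent d p ∈ I)
    (hr : IsTermOrder n r) (G : Finset (MvPolynomial (Fin n) K))
    (hG : IsReducedGroebnerBasis (refineRel ω r) I G)
    (h : ∀ f ∈ G, initialForm ω f = initialForm ω' f) (d : ℕ) :
    Submodule.span K (initialForm ω '' ((Wsub I d : Submodule K (MvPolynomial (Fin n) K)) :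
        Set (MvPolynomial (Fin n) K)))
      = Submodule.span K (initialForm ω' '' ((Wsub I d : Submodule K (MvPolynomial (Fin n) K)) :
        Set (MvPolynomial (Fin n) K))) := by
  classical
  have hSd : {ν : Fin n →₀ ℕ | ν.degree = d}.Finite := finite_degree_eq n d
  have hWs : ∀ f ∈ Wsub I d, ↑f.support ⊆ {ν : Fin n →₀ ℕ | ν.degree = d} := Wsub_supports
  set A : Submodule K (MvPolynomial (Fin n) K) :=
    Submodule.span K (initialForm ω '' ((Wsub I d : Submodule K (MvPolynomial (Fin n) K)) :
      Set (MvPolynomial (Fin n) K))) with hAdef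
  set B : Submodule K (MvPolynomial (Fin n) K) :=
    Submodule.span K (initialForm ω' '' ((Wsub I d : Submodule K (MvPolynomial (Fin n) K)) :
      Set (MvPolynomial (Fin n) K))) with hBdef
  have hAs : ∀ f ∈ A, ↑f.support ⊆ {ν : Fin n →₀ ℕ | ν.degree = d} := by
    rw [hAdef]
    apply span_supports
    rintro p ⟨f, hfW, rfl⟩ μ hμ
    exact hWs f hfW (support_initialForm_subset ω f hμ)
  have hBs : ∀ f ∈ B, ↑f.support ⊆ {ν : Fin n →₀ ℕ | ν.degree = d} := by
    rw [hBdef]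
    apply span_supports
    rintro p ⟨f, hfW, rfl⟩ μ hμ
    exact hWs f hfW (support_initialForm_subset ω' f hμ)
  have hAB : A ≤ B := by
    rw [hAdef, Submodule.span_le]
    rintro p ⟨f, hfW, rfl⟩
    exact initial_mem_span I hgraded hr G hG h d f hfW
  haveI hBfd : FiniteDimensional K B := finiteDimensional_of_supports hSd hBs
  -- term order facts
  have htot1 := fun a b hab => refine_total (ω := ω) hr a b hab
  have htr1 := fun a b c h1 h2 => refine_trans (ω := ω) hr (a := a) (b := b) (c := c) h1 h2
  have htot2 := fun a b hab => refine_total (ω := ω') hr a b hab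
  have htr2 := fun a b c h1 h2 => refine_trans (ω := ω') hr (a := a) (b := b) (c := c) h1 h2
  have hrank : Module.finrank K B ≤ Module.finrank K A := by
    calc Module.finrank K B
        ≤ (leadsSet (refineRel ω' r) (B : Set (MvPolynomial (Fin n) K))).ncard :=
          finrank_le_ncard_leads htot2 htr2 (fun {a b} hab => refine_asymm hr hab) hSd hBs
      _ = (leadsSet (refineRel ω' r)
            ((Wsub I d : Submodule K (MvPolynomial (Fin n) K)) :
              Set (MvPolynomial (Fin n) K))).ncard := by
          rw [hBdef, leadsSet_initial_span hr]
      _ ≤ Module.finrank K (Wsub I d) :=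
          ncard_leads_le_finrank htot2 htr2 (fun {a b} hab => refine_asymm hr hab) hSd hWs
      _ ≤ (leadsSet (refineRel ω r)
            ((Wsub I d : Submodule K (MvPolynomial (Fin n) K)) :
              Set (MvPolynomial (Fin n) K))).ncard :=
          finrank_le_ncard_leads htot1 htr1 (fun {a b} hab => refine_asymm hr hab) hSd hWs
      _ = (leadsSet (refineRel ω r) (A : Set (MvPolynomial (Fin n) K))).ncard := by
          rw [hAdef, leadsSet_initial_span hr]
      _ ≤ Module.finrank K A :=
          ncard_leads_le_finrank htot1 htr1 (fun {a b} hab => refine_asymm hr hab) hSd hAs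
  exact Submodule.eq_of_le_of_finrank_le hAB hrank

theorem span_le_initialIdealW (I : Ideal (MvPolynomial (Fin n) K)) (d : ℕ) (ω₂ : Fin n → ℝ) :
    Submodule.span K (initialForm ω₂ '' ((Wsub I d : Submodule K (MvPolynomial (Fin n) K)) :
        Set (MvPolynomial (Fin n) K)))
      ≤ (initialIdealW ω₂ I).restrictScalars K := by
  rw [Submodule.span_le]
  rintro p ⟨f, hfW, rfl⟩
  have hfI : f ∈ I := (mem_Wsub.1 hfW).1
  exact Ideal.subset_span ⟨f, hfI, rfl⟩

theorem initialIdealW_le (I : Ideal (MvPolynomial (Fin n) K))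
    (hgraded : ∀ p ∈ I, ∀ d : ℕ, MvPolynomial.homogeneousComponent d p ∈ I)
    (ω₁ ω₂ : Fin n → ℝ)
    (hd : ∀ d : ℕ,
      Submodule.span K (initialForm ω₁ '' ((Wsub I d : Submodule K (MvPolynomial (Fin n) K)) :
        Set (MvPolynomial (Fin n) K)))
      ≤ Submodule.span K (initialForm ω₂ '' ((Wsub I d : Submodule K (MvPolynomial (Fin n) K)) :
        Set (MvPolynomial (Fin n) K)))) :
    initialIdealW ω₁ I ≤ initialIdealW ω₂ I := by
  classical
  rw [initialIdealW, Ideal.span_le]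
  rintro p ⟨f, hfI, rfl⟩
  rcases eq_or_ne f 0 with rfl | hne
  · rw [initialForm_zero]
    exact Submodule.zero_mem _
  obtain ⟨x, hx, hmin⟩ := Finset.exists_min_image f.support (wtF ω₁)
    (support_nonempty_of_ne_zero hne)
  have hif : initialForm ω₁ f = part ω₁ (wtF ω₁ x) f := initialForm_eq_part hx rfl hmin
  have hsum := MvPolynomial.sum_homogeneousComponent (initialForm ω₁ f)
  have hmem : (initialForm ω₁ f : MvPolynomial (Fin n) K) ∈ (initialIdealW ω₂ I) := by
    rw [← hsum]
    apply Ideal.sum_mem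
    intro i _
    have hcomp : MvPolynomial.homogeneousComponent i (initialForm ω₁ f)
        = part ω₁ (wtF ω₁ x) (MvPolynomial.homogeneousComponent i f) := by
      rw [hif, part_homogeneousComponent]
    rcases eq_or_ne (part ω₁ (wtF ω₁ x) (MvPolynomial.homogeneousComponent i f)) 0 with h0 | h0
    · rw [hcomp, h0]
      exact Submodule.zero_mem _
    · obtain ⟨y, hy⟩ := support_nonempty_of_ne_zero h0
      obtain ⟨hyf, hyw⟩ := mem_support_part_iff.1 hy
      have hminf : ∀ μ ∈ (MvPolynomial.homogeneousComponent i f).support,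
          wtF ω₁ x ≤ wtF ω₁ μ := by
        intro μ hμ
        exact hmin μ (support_homogeneousComponent_subset i f hμ)
      have hW : MvPolynomial.homogeneousComponent i f ∈ Wsub I i :=
        mem_Wsub.2 ⟨hgraded f hfI i, MvPolynomial.homogeneousComponent_isHomogeneous i f⟩
      have hmem2 : part ω₁ (wtF ω₁ x) (MvPolynomial.homogeneousComponent i f)
          ∈ Submodule.span K (initialForm ω₁ ''
            ((Wsub I i : Submodule K (MvPolynomial (Fin n) K)) :
              Set (MvPolynomial (Fin n) K))) := by
        rw [← initialForm_eq_part hyf hyw hminf]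
        exact Submodule.subset_span ⟨_, hW, rfl⟩
      have := span_le_initialIdealW I i ω₂ (hd i hmem2)
      rw [hcomp]
      exact this
  exact hmem

end Final

end Stmt12Aux

/-- if `G` is the reduced Gröbner basis of a graded ideal `I` with
respect to `≻_ω` and `in_ω(f) = in_{ω'}(f)` for every `f ∈ G`, then
`in_ω(I) = in_{ω'}(I)`. -/
theorem stmt12 {n : ℕ} {K : Type*} [Field K] (I : Ideal (MvPolynomial (Fin n) K))
    (hgraded : ∀ p ∈ I, ∀ d : ℕ, MvPolynomial.homogeneousComponent d p ∈ I)
    (ω ω' : Fin n → ℝ) (r : (Fin n →₀ ℕ) → (Fin n →₀ ℕ) → Prop)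
    (hr : IsTermOrder n r) (G : Finset (MvPolynomial (Fin n) K))
    (hG : IsReducedGroebnerBasis (refineRel ω r) I G)
    (h : ∀ f ∈ G, initialForm ω f = initialForm ω' f) :
    initialIdealW ω I = initialIdealW ω' I := by
  have heq := fun d => Stmt12Aux.Asub_eq_Bsub I hgraded hr G hG h d
  apply le_antisymm
  · exact Stmt12Aux.initialIdealW_le I hgraded ω ω' (fun d => (heq d).le)
  · exact Stmt12Aux.initialIdealW_le I hgraded ω' ω (fun d => (heq d).ge)
end
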